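/- arXiv:2403.06761 — 8 statements merged into one kernel-verified Lean document; each statement's English description precedes it below -/
import Mathlib

section
/- Let ε, a ∈ ℝ with a ≠ 0, let x, v ∈ ℂ × ℂ, set c := ‖v‖ and δ := Im⟪x,v⟫, and assume a² = ε²/4 + c² − ε·δ. Let J : ℂ × ℂ → ℂ × ℂ be an ℝ-linear map satisfying J ∘ J = −id, J(i·w) = i·J(w) for all w ∈ ℂ × ℂ, and J x = (1/a)·(v − (ε/2)·(i·x)). Then the curve γ(t) := e^{iεt/2} · (exp(t·a·J))(x), where exp denotes the exponential of the ℝ-linear endomorphism and e^{iεt/2}· is componentwise complex scalar multiplication, satisfies γ(0) = x, γ'(0) = v, and the magnetic geodesic equation γ''(t) − ε·(i·γ'(t)) + (c² − ε·δ)·γ(t) = 0 for all t ∈ ℝ. -/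
open Complex

/-- The Hermitian inner product on `ℂ × ℂ`: `⟪x,v⟫ = conj x₁ * v₁ + conj x₂ * v₂`. -/
noncomputable def hInner (x v : ℂ × ℂ) : ℂ :=
  (starRingEnd ℂ) x.1 * v.1 + (starRingEnd ℂ) x.2 * v.2

/-- The Euclidean norm on `ℂ × ℂ`: `‖x‖ = √(|x₁|² + |x₂|²)`. -/
noncomputable def hNorm (x : ℂ × ℂ) : ℝ :=
  Real.sqrt (Complex.normSq x.1 + Complex.normSq x.2)

private lemma hrs (r : ℝ) (w : ℂ × ℂ) : r • w = (r : ℂ) • w := by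
  rw [← algebraMap_smul ℂ r w]; norm_num

private lemma hf_aux (a : ℝ) (J : (ℂ × ℂ) →L[ℝ] (ℂ × ℂ)) (x : ℂ × ℂ) (t : ℝ) :
    HasDerivAt (fun s : ℝ => (NormedSpace.exp ((s * a) • J)) x)
      (a • J ((NormedSpace.exp ((t * a) • J)) x)) t := by
  have h1 : HasDerivAt (fun u : ℝ => NormedSpace.exp (u • (a • J)))
      ((a • J) * NormedSpace.exp (t • (a • J))) t := hasDerivAt_exp_smul_const' (a • J) t
  have h2 := h1.clm_apply (hasDerivAt_const t x)
  simpa only [ContinuousLinearMap.mul_apply, ContinuousLinearMap.smul_apply, map_zero,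
    add_zero, smul_smul] using h2

private lemma hφ_aux (ε : ℝ) (t : ℝ) :
    HasDerivAt (fun s : ℝ => Complex.exp (Complex.I * ε * s / 2))
      (Complex.exp (Complex.I * ε * t / 2) * (Complex.I * ε / 2)) t := by
  have hz : HasDerivAt (fun z : ℂ => Complex.I * ε * z / 2) (Complex.I * ε / 2) (t : ℂ) := by
    simpa [mul_div_assoc] using ((hasDerivAt_id (t : ℂ)).const_mul (Complex.I * ε)).div_const 2
  have h1 : HasDerivAt (fun z : ℂ => Complex.exp (Complex.I * ε * z / 2))
      (Complex.exp (Complex.I * ε * t / 2) * (Complex.I * ε / 2)) (t : ℂ) := by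
    exact (Complex.hasDerivAt_exp _).comp (t : ℂ) hz
  exact h1.comp_ofReal

theorem stmt_0 (ε a : ℝ) (ha : a ≠ 0) (x v : ℂ × ℂ) (c δ : ℝ)
    (hc : c = hNorm v) (hδ : δ = (hInner x v).im)
    (haa : a ^ 2 = ε ^ 2 / 4 + c ^ 2 - ε * δ)
    (J : (ℂ × ℂ) →L[ℝ] (ℂ × ℂ))
    (hJ2 : ∀ w, J (J w) = -w)
    (hJi : ∀ w, J (Complex.I • w) = Complex.I • J w)
    (hJx : J x = (1 / a) • (v - (ε / 2) • (Complex.I • x)))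
    (γ : ℝ → ℂ × ℂ)
    (hγ : ∀ t : ℝ, γ t =
      Complex.exp (Complex.I * ε * t / 2) • (NormedSpace.exp ((t * a) • J)) x) :
    γ 0 = x ∧ deriv γ 0 = v ∧
      ∀ t : ℝ, deriv (deriv γ) t - ε • (Complex.I • deriv γ t)
        + (c ^ 2 - ε * δ) • γ t = 0 := by
  have hγeq : γ = fun t : ℝ =>
      Complex.exp (Complex.I * ε * t / 2) • (NormedSpace.exp ((t * a) • J)) x := funext hγ
  subst hγeq
  -- first derivative
  have hd1 : ∀ t : ℝ, HasDerivAt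
      (fun t : ℝ => Complex.exp (Complex.I * ε * t / 2) • (NormedSpace.exp ((t * a) • J)) x)
      (Complex.exp (Complex.I * ε * t / 2) • (a • J ((NormedSpace.exp ((t * a) • J)) x))
        + (Complex.exp (Complex.I * ε * t / 2) * (Complex.I * ε / 2))
            • (NormedSpace.exp ((t * a) • J)) x) t :=
    fun t => (hφ_aux ε t).smul (hf_aux a J x t)
  have hderiv1 : deriv (fun t : ℝ =>
      Complex.exp (Complex.I * ε * t / 2) • (NormedSpace.exp ((t * a) • J)) x)
      = fun t : ℝ =>
      Complex.exp (Complex.I * ε * t / 2) • (a • J ((NormedSpace.exp ((t * a) • J)) x))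
        + (Complex.exp (Complex.I * ε * t / 2) * (Complex.I * ε / 2))
            • (NormedSpace.exp ((t * a) • J)) x := funext fun t => (hd1 t).deriv
  -- derivative of t ↦ a • J (F t)
  have hg : ∀ t : ℝ, HasDerivAt
      (fun s : ℝ => a • J ((NormedSpace.exp ((s * a) • J)) x))
      (a • J (a • J ((NormedSpace.exp ((t * a) • J)) x))) t := by
    intro t
    have h := (hasDerivAt_const t (a • J)).clm_apply (hf_aux a J x t)
    simpa using h
  -- second derivative
  have hd2 : ∀ t : ℝ, HasDerivAt
      (fun t : ℝ =>
        Complex.exp (Complex.I * ε * t / 2) • (a • J ((NormedSpace.exp ((t * a) • J)) x))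
          + (Complex.exp (Complex.I * ε * t / 2) * (Complex.I * ε / 2))
              • (NormedSpace.exp ((t * a) • J)) x)
      ((Complex.exp (Complex.I * ε * t / 2) • (a • J (a • J ((NormedSpace.exp ((t * a) • J)) x)))
          + (Complex.exp (Complex.I * ε * t / 2) * (Complex.I * ε / 2))
              • (a • J ((NormedSpace.exp ((t * a) • J)) x)))
        + ((Complex.exp (Complex.I * ε * t / 2) * (Complex.I * ε / 2))
              • (a • J ((NormedSpace.exp ((t * a) • J)) x))
          + (Complex.exp (Complex.I * ε * t / 2) * (Complex.I * ε / 2) * (Complex.I * ε / 2))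
              • (NormedSpace.exp ((t * a) • J)) x)) t := by
    intro t
    have hA := (hφ_aux ε t).smul (hg t)
    have hφ2 : HasDerivAt (fun s : ℝ => Complex.exp (Complex.I * ε * s / 2) * (Complex.I * ε / 2))
        (Complex.exp (Complex.I * ε * t / 2) * (Complex.I * ε / 2) * (Complex.I * ε / 2)) t := by
      simpa [mul_comm, mul_assoc, mul_left_comm] using (hφ_aux ε t).mul_const (Complex.I * ε / 2)
    have hB := hφ2.smul (hf_aux a J x t)
    exact hA.add hB
  have h0 : (NormedSpace.exp ((0:ℝ) • J)) x = x := by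
    rw [zero_smul ℝ J, NormedSpace.exp_zero, ContinuousLinearMap.one_apply]
  refine ⟨?_, ?_, ?_⟩
  · simp [h0]
  · rw [hderiv1]
    simp only [zero_mul, h0, Complex.ofReal_zero, mul_zero, zero_div, Complex.exp_zero,
      one_smul, one_mul]
    rw [hJx, hrs a, hrs (1/a), hrs (ε/2)]
    push_cast
    have haC : (a : ℂ) ≠ 0 := by exact_mod_cast ha
    match_scalars
    · try simp only [Complex.coe_algebraMap]
      field_simp
    · try simp only [Complex.coe_algebraMap]
      field_simp
      ring
  · intro t
    rw [hderiv1, (hd2 t).deriv]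
    have hBB : a • J (a • J ((NormedSpace.exp ((t * a) • J)) x))
        = -((a ^ 2 : ℝ) • ((NormedSpace.exp ((t * a) • J)) x)) := by
      rw [map_smul, hJ2, smul_neg, smul_neg, smul_smul, sq]
    rw [hBB]
    have haaC : (a : ℂ) ^ 2 = (ε : ℂ) ^ 2 / 4 + (c : ℂ) ^ 2 - ε * δ := by exact_mod_cast haa
    rw [hrs (a ^ 2), hrs ε, hrs (c ^ 2 - ε * δ), hrs a (J _)]
    push_cast
    match_scalars
    · try simp only [Complex.coe_algebraMap]
      linear_combination (-(Complex.exp (Complex.I * ε * t / 2))) * haaC +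
        (-(Complex.exp (Complex.I * ε * t / 2)) * (ε : ℂ) ^ 2 / 4) * Complex.I_sq
    · try simp only [Complex.coe_algebraMap]
      ring
end

section
/- Let ε ∈ ℝ, x, v ∈ ℂ × ℂ, set c := ‖v‖, δ := Im⟪x,v⟫, and assume D := ε² + 4(c² − ε·δ) > 0. Set θ₊ := (ε + √D)/2, θ₋ := (ε − √D)/2, p₊ := −(θ₋·x + i·v)/(θ₊ − θ₋), and p₋ := (θ₊·x + i·v)/(θ₊ − θ₋). Then the curve γ(t) := e^{iθ₊t}·p₊ + e^{iθ₋t}·p₋ satisfies γ(0) = x, γ'(0) = v, and the magnetic geodesic equation γ''(t) − ε·(i·γ'(t)) + (c² − ε·δ)·γ(t) = 0 for all t ∈ ℝ; moreover every twice-differentiable curve η : ℝ → ℂ × ℂ satisfying this equation with η(0) = x and η'(0) = v equals γ. -/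
open Complex

private lemma cexp_hasDerivAt (z : ℂ) (t : ℝ) :
    HasDerivAt (fun s : ℝ => Complex.exp (z * s)) (z * Complex.exp (z * t)) t := by
  have h1 : HasDerivAt (fun s : ℝ => z * (s : ℂ)) z t := by
    simpa using (Complex.ofRealCLM.hasDerivAt (x := t)).const_mul z
  simpa [mul_comm] using h1.cexp

private lemma expSmul_hasDerivAt (z : ℂ) (p : ℂ × ℂ) (t : ℝ) :
    HasDerivAt (fun s : ℝ => Complex.exp (z * s) • p) ((z * Complex.exp (z * t)) • p) t :=
  (cexp_hasDerivAt z t).smul_const p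

private lemma sub_helper {E : Type*} [AddCommGroup E] {A B C : E} (h : A - B + C = 0) :
    A = B - C := by
  have h2 : A - (B - C) = A - B + C := by abel
  exact sub_eq_zero.mp (h2.trans h)

private lemma init_pos (θp θm : ℝ) (hne : θp - θm ≠ 0) (x v : ℂ × ℂ) :
    -((θp - θm)⁻¹ • (θm • x + Complex.I • v)) + (θp - θm)⁻¹ • (θp • x + Complex.I • v) = x := by
  have hneC : (θp : ℂ) - θm ≠ 0 := by
    have := Complex.ofReal_ne_zero.mpr hne; push_cast at this; exact this
  match_scalars
  · simp only [Complex.coe_algebraMap]; field_simp; ring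
  · simp only [Complex.coe_algebraMap]; field_simp; ring

private lemma init_vel (θp θm : ℝ) (hne : θp - θm ≠ 0) (x v : ℂ × ℂ) :
    (Complex.I * θp) • (-((θp - θm)⁻¹ • (θm • x + Complex.I • v)))
      + (Complex.I * θm) • ((θp - θm)⁻¹ • (θp • x + Complex.I • v)) = v := by
  have hneC : (θp : ℂ) - θm ≠ 0 := by
    have := Complex.ofReal_ne_zero.mpr hne; push_cast at this; exact this
  match_scalars
  · simp only [Complex.coe_algebraMap]; field_simp
    try ring_nf
    try simp only [Complex.I_sq]
    try ring
  · simp only [Complex.coe_algebraMap]; field_simp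
    try ring_nf
    try simp only [Complex.I_sq]
    try ring

private lemma deriv_zero_aux (ε c δ θp θm : ℝ) (e : ℂ) (A B : ℂ × ℂ)
    (hsumC : (θp : ℂ) + θm = ε) (hprodC : (θp : ℂ) * θm = -((c : ℂ) ^ 2 - ε * δ)) :
    e • ((ε • (Complex.I • A) - (c ^ 2 - ε * δ) • B) - (Complex.I * θp) • A)
      + (-(Complex.I * θm) * e) • (A - (Complex.I * θp) • B) = 0 := by
  match_scalars
  · simp only [Complex.coe_algebraMap]; push_cast
    linear_combination (-(Complex.I * e)) * hsumC
  · simp only [Complex.coe_algebraMap]; push_cast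
    linear_combination (Complex.I ^ 2 * e) * hprodC
      + (-(e * ((c : ℂ) ^ 2 - ε * δ))) * Complex.I_sq

private lemma deriv_zero_aux2 (z e : ℂ) (B : ℂ × ℂ) : e • (z • B) + (-z * e) • B = 0 := by
  module

theorem stmt_1 (ε : ℝ) (x v : ℂ × ℂ) (c δ D : ℝ)
    (hc : c = hNorm v) (hδ : δ = (hInner x v).im)
    (hD : D = ε ^ 2 + 4 * (c ^ 2 - ε * δ)) (hDpos : 0 < D)
    (θp θm : ℝ) (hθp : θp = (ε + Real.sqrt D) / 2) (hθm : θm = (ε - Real.sqrt D) / 2)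
    (pp pm : ℂ × ℂ)
    (hpp : pp = -((θp - θm)⁻¹ • (θm • x + Complex.I • v)))
    (hpm : pm = (θp - θm)⁻¹ • (θp • x + Complex.I • v))
    (γ : ℝ → ℂ × ℂ)
    (hγ : ∀ t : ℝ, γ t = Complex.exp (Complex.I * θp * t) • pp
        + Complex.exp (Complex.I * θm * t) • pm) :
    γ 0 = x ∧ deriv γ 0 = v ∧
      (∀ t : ℝ, deriv (deriv γ) t - ε • (Complex.I • deriv γ t)
        + (c ^ 2 - ε * δ) • γ t = 0) ∧
      ∀ η : ℝ → ℂ × ℂ, Differentiable ℝ η → Differentiable ℝ (deriv η) →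
        η 0 = x → deriv η 0 = v →
        (∀ t : ℝ, deriv (deriv η) t - ε • (Complex.I • deriv η t)
          + (c ^ 2 - ε * δ) • η t = 0) →
        η = γ := by
  -- scalar preliminaries
  have hDD : Real.sqrt D * Real.sqrt D = D := Real.mul_self_sqrt hDpos.le
  have hdiffθ : θp - θm = Real.sqrt D := by rw [hθp, hθm]; ring
  have hne : θp - θm ≠ 0 := by rw [hdiffθ]; exact (Real.sqrt_pos.mpr hDpos).ne'
  have hsum : θp + θm = ε := by rw [hθp, hθm]; ring
  have hprod : θp * θm = -(c ^ 2 - ε * δ) := by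
    have h1 : θp * θm = (ε * ε - Real.sqrt D * Real.sqrt D) / 4 := by rw [hθp, hθm]; ring
    rw [hDD, hD] at h1; linarith
  have hrp : θp ^ 2 = ε * θp + (c ^ 2 - ε * δ) := by linear_combination θp * hsum - hprod
  have hrm : θm ^ 2 = ε * θm + (c ^ 2 - ε * δ) := by linear_combination θm * hsum - hprod
  have hsumC : (θp : ℂ) + θm = ε := by exact_mod_cast hsum
  have hprodC : (θp : ℂ) * θm = -((c : ℂ) ^ 2 - ε * δ) := by exact_mod_cast hprod
  have hrpC : (θp : ℂ) ^ 2 = (ε : ℂ) * θp + ((c : ℂ) ^ 2 - ε * δ) := by exact_mod_cast hrp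
  have hrmC : (θm : ℂ) ^ 2 = (ε : ℂ) * θm + ((c : ℂ) ^ 2 - ε * δ) := by exact_mod_cast hrm
  -- derivatives of γ
  have hγf : γ = fun t : ℝ => Complex.exp (Complex.I * θp * t) • pp
      + Complex.exp (Complex.I * θm * t) • pm := funext hγ
  have hd1 : ∀ t : ℝ, HasDerivAt γ
      ((Complex.I * θp * Complex.exp (Complex.I * θp * t)) • pp
        + (Complex.I * θm * Complex.exp (Complex.I * θm * t)) • pm) t := by
    intro t; rw [hγf]
    exact (expSmul_hasDerivAt (Complex.I * θp) pp t).add (expSmul_hasDerivAt (Complex.I * θm) pm t)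
  have hderiv : deriv γ = fun t : ℝ => (Complex.I * θp * Complex.exp (Complex.I * θp * t)) • pp
      + (Complex.I * θm * Complex.exp (Complex.I * θm * t)) • pm :=
    funext fun t => (hd1 t).deriv
  have hd2 : ∀ t : ℝ, HasDerivAt (fun t : ℝ =>
        (Complex.I * θp * Complex.exp (Complex.I * θp * t)) • pp
        + (Complex.I * θm * Complex.exp (Complex.I * θm * t)) • pm)
      ((Complex.I * θp * (Complex.I * θp * Complex.exp (Complex.I * θp * t))) • pp
        + (Complex.I * θm * (Complex.I * θm * Complex.exp (Complex.I * θm * t))) • pm) t := by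
    intro t
    have h1 := (expSmul_hasDerivAt (Complex.I * θp) pp t).const_smul (Complex.I * (θp : ℂ))
    have h2 := (expSmul_hasDerivAt (Complex.I * θm) pm t).const_smul (Complex.I * (θm : ℂ))
    have h3 := h1.add h2
    refine (h3.congr_deriv (by simp [smul_smul])).congr_of_eventuallyEq
      (Filter.Eventually.of_forall fun s => ?_)
    simp [smul_smul]
  -- initial conditions
  have hγ0 : γ 0 = x := by
    rw [hγ 0, hpp, hpm]
    simp only [Complex.ofReal_zero, mul_zero, Complex.exp_zero, one_smul]
    exact init_pos θp θm hne x v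
  have hdγ0 : ((Complex.I * θp * Complex.exp (Complex.I * θp * (0:ℝ))) • pp
      + (Complex.I * θm * Complex.exp (Complex.I * θm * (0:ℝ))) • pm) = v := by
    rw [hpp, hpm]
    simp only [Complex.ofReal_zero, mul_zero, Complex.exp_zero, mul_one]
    exact init_vel θp θm hne x v
  have hderiv0 : deriv γ 0 = v := by rw [hderiv]; exact hdγ0
  have hODEγ : ∀ t : ℝ, deriv (deriv γ) t - ε • (Complex.I • deriv γ t)
      + (c ^ 2 - ε * δ) • γ t = 0 := by
    intro t
    rw [hderiv, (hd2 t).deriv, hγ t]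
    match_scalars
    · simp only [Complex.coe_algebraMap]
      push_cast
      linear_combination (-(Complex.exp (Complex.I * θp * t))) * hrpC
        + ((θp : ℂ) ^ 2 - ε * θp) * Complex.exp (Complex.I * θp * t) * Complex.I_sq
    · simp only [Complex.coe_algebraMap]
      push_cast
      linear_combination (-(Complex.exp (Complex.I * θm * t))) * hrmC
        + ((θm : ℂ) ^ 2 - ε * θm) * Complex.exp (Complex.I * θm * t) * Complex.I_sq
  refine ⟨hγ0, hderiv0, hODEγ, ?_⟩
  -- uniqueness
  intro η hη1 hη2 hη0 hη0' hηODE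
  set W : ℝ → ℂ × ℂ := fun t => η t - γ t with hWdef
  set DW : ℝ → ℂ × ℂ := fun t =>
    deriv η t - ((Complex.I * θp * Complex.exp (Complex.I * θp * t)) • pp
      + (Complex.I * θm * Complex.exp (Complex.I * θm * t)) • pm) with hDWdef
  have hW1 : ∀ t, HasDerivAt W (DW t) t := fun t => ((hη1 t).hasDerivAt).sub (hd1 t)
  have hDW1 : ∀ t, HasDerivAt DW
      (deriv (deriv η) t
        - ((Complex.I * θp * (Complex.I * θp * Complex.exp (Complex.I * θp * t))) • pp
          + (Complex.I * θm * (Complex.I * θm * Complex.exp (Complex.I * θm * t))) • pm)) t :=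
    fun t => ((hη2 t).hasDerivAt).sub (hd2 t)
  have hW0 : W 0 = 0 := by simp [hWdef, hη0, hγ0]
  have hDW0 : DW 0 = 0 := by
    simp only [hDWdef]
    rw [hη0', hdγ0]
    simp
  -- W satisfies the ODE
  have hWode : ∀ t, (deriv (deriv η) t
        - ((Complex.I * θp * (Complex.I * θp * Complex.exp (Complex.I * θp * t))) • pp
          + (Complex.I * θm * (Complex.I * θm * Complex.exp (Complex.I * θm * t))) • pm))
      = ε • (Complex.I • DW t) - (c ^ 2 - ε * δ) • W t := by
    intro t
    have h1 : deriv (deriv η) t = ε • (Complex.I • deriv η t) - (c ^ 2 - ε * δ) • η t :=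
      sub_helper (hηODE t)
    have h2 : ((Complex.I * θp * (Complex.I * θp * Complex.exp (Complex.I * θp * t))) • pp
          + (Complex.I * θm * (Complex.I * θm * Complex.exp (Complex.I * θm * t))) • pm)
        = ε • (Complex.I • ((Complex.I * θp * Complex.exp (Complex.I * θp * t)) • pp
          + (Complex.I * θm * Complex.exp (Complex.I * θm * t)) • pm))
          - (c ^ 2 - ε * δ) • γ t := by
      have h3 := hODEγ t
      rw [hderiv, (hd2 t).deriv] at h3
      exact sub_helper h3
    rw [h1, h2, hγ t]
    simp only [hWdef, hDWdef, hγ t]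
    module
  -- first reduction: DW t = (I θp) • W t
  have hu : ∀ t : ℝ, HasDerivAt (fun s : ℝ =>
      Complex.exp (-(Complex.I * θm) * s) • (DW s - (Complex.I * θp) • W s)) 0 t := by
    intro t
    have hF : HasDerivAt (fun s => DW s - (Complex.I * θp) • W s)
        ((deriv (deriv η) t
          - ((Complex.I * θp * (Complex.I * θp * Complex.exp (Complex.I * θp * t))) • pp
            + (Complex.I * θm * (Complex.I * θm * Complex.exp (Complex.I * θm * t))) • pm))
          - (Complex.I * θp) • DW t) t :=
      (hDW1 t).sub (by exact (hW1 t).const_smul (Complex.I * (θp : ℂ)))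
    have h := (cexp_hasDerivAt (-(Complex.I * θm)) t).smul hF
    have hval : Complex.exp (-(Complex.I * θm) * t) • ((deriv (deriv η) t
          - ((Complex.I * θp * (Complex.I * θp * Complex.exp (Complex.I * θp * t))) • pp
            + (Complex.I * θm * (Complex.I * θm * Complex.exp (Complex.I * θm * t))) • pm))
          - (Complex.I * θp) • DW t)
        + (-(Complex.I * θm) * Complex.exp (-(Complex.I * θm) * t)) •
            (DW t - (Complex.I * θp) • W t) = 0 := by
      rw [hWode t]
      exact deriv_zero_aux ε c δ θp θm _ (DW t) (W t) hsumC hprodC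
    rw [← hval]
    exact h
  have hconst : ∀ t : ℝ, Complex.exp (-(Complex.I * θm) * t) • (DW t - (Complex.I * θp) • W t)
      = 0 := by
    intro t
    have h0 : Complex.exp (-(Complex.I * θm) * (0:ℝ)) • (DW 0 - (Complex.I * θp) • W 0) = 0 := by
      rw [hW0, hDW0]; simp
    have := is_const_of_deriv_eq_zero (f := fun s : ℝ =>
        Complex.exp (-(Complex.I * θm) * s) • (DW s - (Complex.I * θp) • W s))
      (fun s => (hu s).differentiableAt) (fun s => (hu s).deriv) t 0
    rw [this]
    exact h0
  have hDWa : ∀ t : ℝ, DW t = (Complex.I * θp) • W t := by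
    intro t
    have h := hconst t
    have h2 := congrArg (fun y => Complex.exp ((Complex.I * θm) * t) • y) h
    simp only [smul_smul, smul_zero, ← Complex.exp_add] at h2
    rw [show (Complex.I * θm) * t + -(Complex.I * θm) * t = 0 by ring, Complex.exp_zero,
      one_smul] at h2
    exact sub_eq_zero.mp h2
  -- second reduction: W t = 0
  have hs : ∀ t : ℝ, HasDerivAt (fun s : ℝ => Complex.exp (-(Complex.I * θp) * s) • W s) 0 t := by
    intro t
    have h := (cexp_hasDerivAt (-(Complex.I * θp)) t).smul (hW1 t)
    have hval : Complex.exp (-(Complex.I * θp) * t) • DW t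
        + (-(Complex.I * θp) * Complex.exp (-(Complex.I * θp) * t)) • W t = 0 := by
      rw [hDWa t]
      exact deriv_zero_aux2 (Complex.I * θp) _ (W t)
    rw [← hval]
    exact h
  have hW : ∀ t : ℝ, W t = 0 := by
    intro t
    have h0 : Complex.exp (-(Complex.I * θp) * (0:ℝ)) • W 0 = 0 := by rw [hW0]; simp
    have hcst := is_const_of_deriv_eq_zero (f := fun s : ℝ =>
        Complex.exp (-(Complex.I * θp) * s) • W s)
      (fun s => (hs s).differentiableAt) (fun s => (hs s).deriv) t 0
    have h : Complex.exp (-(Complex.I * θp) * t) • W t = 0 := by rw [hcst]; exact h0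
    have h2 := congrArg (fun y => Complex.exp ((Complex.I * θp) * t) • y) h
    simp only [smul_smul, smul_zero, ← Complex.exp_add] at h2
    rw [show (Complex.I * θp) * t + -(Complex.I * θp) * t = 0 by ring, Complex.exp_zero,
      one_smul] at h2
    exact h2
  funext t
  have hWt := hW t
  rw [hWdef] at hWt
  exact sub_eq_zero.mp hWt
end

section
/- Let θ₊, θ₋ ∈ ℝ with θ₋ ≠ 0 and |θ₊| ≥ |θ₋|, and let p₊, p₋ ∈ ℂ × ℂ with ‖p₊‖² + ‖p₋‖² = 1 and p₋ ≠ 0. Set c := √(θ₊²‖p₊‖² + θ₋²‖p₋‖²) and define γ(t) := e^{iθ₊t}·p₊ + e^{iθ₋t}·p₋. If γ is nonconstant and satisfies γ(t + T) = γ(t) for all t ∈ ℝ for some T > 0, then T ≥ 2π/c. -/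
open Complex

lemma exp_helper (θp θm : ℝ) (hne : θp ≠ θm) (q r : ℂ) (hr : r ≠ 0) (T : ℝ)
    (h : ∀ t : ℝ, Complex.exp (Complex.I*θp*(t+T)) * q + Complex.exp (Complex.I*θm*(t+T)) * r
        = Complex.exp (Complex.I*θp*t) * q + Complex.exp (Complex.I*θm*t) * r) :
    Complex.exp (Complex.I*θm*T) = 1 := by
  set A := Complex.exp (Complex.I*θp*T) with hA
  set B := Complex.exp (Complex.I*θm*T) with hB
  have h' : ∀ t : ℝ, Complex.exp (Complex.I*θp*t) * ((A - 1) * q)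
      = Complex.exp (Complex.I*θm*t) * ((1 - B) * r) := by
    intro t
    have ht := h t
    have e1 : Complex.exp (Complex.I*θp*(t+T)) = Complex.exp (Complex.I*θp*t) * A := by
      rw [hA, ← Complex.exp_add]; ring_nf
    have e2 : Complex.exp (Complex.I*θm*(t+T)) = Complex.exp (Complex.I*θm*t) * B := by
      rw [hB, ← Complex.exp_add]; ring_nf
    rw [e1, e2] at ht
    linear_combination ht
  have h0 : (A - 1) * q = (1 - B) * r := by simpa using h' 0
  by_contra hB1
  have hrB : (1 - B) * r ≠ 0 := by
    apply mul_ne_zero _ hr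
    intro h1
    exact hB1 (by linear_combination -h1)
  set t0 : ℝ := Real.pi / (θp - θm) with ht0
  have hsub : (θp : ℂ) - θm ≠ 0 := sub_ne_zero.mpr (by exact_mod_cast hne)
  have hEF : Complex.exp (Complex.I*θp*t0) = Complex.exp (Complex.I*θm*t0) := by
    have := h' t0
    rw [h0] at this
    exact mul_right_cancel₀ hrB this
  have hdiff : Complex.I*θp*t0 - Complex.I*θm*t0 = Real.pi * Complex.I := by
    have : (t0 : ℂ) = Real.pi / ((θp:ℂ) - θm) := by
      rw [ht0]; push_cast; ring
    rw [this]
    field_simp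
  have : Complex.exp (Real.pi * Complex.I) = 1 := by
    rw [← hdiff, Complex.exp_sub, hEF, div_self (Complex.exp_ne_zero _)]
  rw [Complex.exp_pi_mul_I] at this
  norm_num at this

theorem stmt_2 (θp θm : ℝ) (hθm : θm ≠ 0) (hθ : |θm| ≤ |θp|)
    (pp pm : ℂ × ℂ) (hnorm : hNorm pp ^ 2 + hNorm pm ^ 2 = 1) (hpm : pm ≠ 0)
    (c : ℝ) (hc : c = Real.sqrt (θp ^ 2 * hNorm pp ^ 2 + θm ^ 2 * hNorm pm ^ 2))
    (γ : ℝ → ℂ × ℂ)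
    (hγ : ∀ t : ℝ, γ t = Complex.exp (Complex.I * θp * t) • pp
        + Complex.exp (Complex.I * θm * t) • pm)
    (hnonconst : ∃ s t : ℝ, γ s ≠ γ t)
    (T : ℝ) (hT : 0 < T) (hper : ∀ t : ℝ, γ (t + T) = γ t) :
    T ≥ 2 * Real.pi / c := by
  -- norms
  have hpp2 : hNorm pp ^ 2 = Complex.normSq pp.1 + Complex.normSq pp.2 := by
    rw [hNorm, Real.sq_sqrt (add_nonneg (Complex.normSq_nonneg _) (Complex.normSq_nonneg _))]
  have hpm2 : hNorm pm ^ 2 = Complex.normSq pm.1 + Complex.normSq pm.2 := by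
    rw [hNorm, Real.sq_sqrt (add_nonneg (Complex.normSq_nonneg _) (Complex.normSq_nonneg _))]
  have ha : 0 ≤ hNorm pp ^ 2 := by rw [hpp2]; exact add_nonneg (Complex.normSq_nonneg _) (Complex.normSq_nonneg _)
  have hb : 0 ≤ hNorm pm ^ 2 := by rw [hpm2]; exact add_nonneg (Complex.normSq_nonneg _) (Complex.normSq_nonneg _)
  have hθsq : θm ^ 2 ≤ θp ^ 2 := by
    nlinarith [_root_.sq_abs θm, _root_.sq_abs θp, mul_self_le_mul_self (abs_nonneg θm) hθ]
  have hcge : |θm| ≤ c := by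
    rw [hc]
    have h1 : θm ^ 2 ≤ θp ^ 2 * hNorm pp ^ 2 + θm ^ 2 * hNorm pm ^ 2 := by
      nlinarith
    calc |θm| = Real.sqrt (θm ^ 2) := by rw [Real.sqrt_sq_eq_abs]
    _ ≤ _ := Real.sqrt_le_sqrt h1
  have hθmpos : 0 < |θm| := abs_pos.mpr hθm
  have hcpos : 0 < c := lt_of_lt_of_le hθmpos hcge
  -- key periodicity equation
  have key : ∀ t : ℝ, Complex.exp (Complex.I * θp * (t + T : ℝ)) • pp
      + Complex.exp (Complex.I * θm * (t + T : ℝ)) • pm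
      = Complex.exp (Complex.I * θp * t) • pp + Complex.exp (Complex.I * θm * t) • pm := by
    intro t
    rw [← hγ, ← hγ]
    exact hper t
  -- show exp(I θm T) = 1
  have hB : Complex.exp (Complex.I * θm * T) = 1 := by
    by_cases hne : θp = θm
    · subst hne
      have h0 := key 0
      simp only [zero_add, Complex.ofReal_zero, mul_zero, Complex.exp_zero, one_smul] at h0
      have h0' : Complex.exp (Complex.I * θp * T) • (pp + pm) = pp + pm := by
        rw [smul_add]
        exact h0
      by_cases hsum : pp + pm = 0
      · exfalso
        obtain ⟨s, t, hst⟩ := hnonconst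
        apply hst
        have : ∀ u : ℝ, γ u = 0 := by
          intro u
          rw [hγ, ← smul_add, hsum, smul_zero]
        rw [this s, this t]
      · have : (Complex.exp (Complex.I * θp * T) - 1) • (pp + pm) = 0 := by
          rw [sub_smul, one_smul, h0', sub_self]
        rcases smul_eq_zero.mp this with h | h
        · linear_combination h
        · exact absurd h hsum
    · have hpm' : pm.1 ≠ 0 ∨ pm.2 ≠ 0 := by
        by_contra hcon
        push_neg at hcon
        exact hpm (Prod.ext hcon.1 hcon.2)
      rcases hpm' with h1 | h2
      · apply exp_helper θp θm hne pp.1 pm.1 h1 T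
        intro t
        have := congrArg Prod.fst (key t)
        simpa [Prod.fst_add, smul_eq_mul] using this
      · apply exp_helper θp θm hne pp.2 pm.2 h2 T
        intro t
        have := congrArg Prod.snd (key t)
        simpa [Prod.snd_add, smul_eq_mul] using this
  -- extract θm T ∈ 2πℤ
  obtain ⟨n, hn⟩ := Complex.exp_eq_one_iff.mp hB
  have hreal : θm * T = n * (2 * Real.pi) := by
    have : Complex.I * ((θm : ℂ) * T) = Complex.I * ((n : ℂ) * (2 * Real.pi)) := by
      linear_combination hn
    have h2 := mul_left_cancel₀ Complex.I_ne_zero this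
    exact_mod_cast h2
  have hn0 : n ≠ 0 := by
    intro h0
    rw [h0] at hreal
    simp at hreal
    rcases hreal with h | h
    · exact hθm h
    · exact hT.ne' h
  have hge : 2 * Real.pi ≤ |θm| * T := by
    have h1 : |θm| * T = |θm * T| := by
      rw [abs_mul, abs_of_pos hT]
    rw [h1, hreal, abs_mul]
    have : (1 : ℝ) ≤ |(n : ℝ)| := by
      exact_mod_cast Int.one_le_abs hn0
    have hpi : 0 < 2 * Real.pi := by positivity
    calc 2 * Real.pi = 1 * (2 * Real.pi) := by ring
    _ ≤ |(n:ℝ)| * |2 * Real.pi| := by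
        rw [abs_of_pos hpi]
        exact mul_le_mul_of_nonneg_right this hpi.le
  -- conclude
  have hT1 : 2 * Real.pi / |θm| ≤ T := by
    rw [div_le_iff₀ hθmpos]
    linarith [hge]
  have hT2 : 2 * Real.pi / c ≤ 2 * Real.pi / |θm| :=
    div_le_div_of_nonneg_left (by positivity) hθmpos hcge
  linarith
end

section
/- Let p ≥ 1 be an odd integer and q ∈ ℤ with p ∤ q, and define j : ℂ × ℂ → ℂ × ℂ by j(z₁, z₂) := (i·z₁, −i·z₂). Let x, v ∈ ℂ × ℂ with ‖x‖ = 1, ‖v‖ = 1, and Re⟪x,v⟫ = 0. If the point cos(2πq/p)·x + sin(2πq/p)·(jx) lies in the real linear span of {x, v}, then the real linear span of {x, v} equals the real linear span of {x, jx}. In particular, the points x and cos(2πq/p)·x + sin(2πq/p)·(jx) are ℝ-linearly independent, and the unique great circle of S³ through these two points is the one through x in direction jx. -/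
open Complex

/-- The complex structure `j(z₁, z₂) = (i z₁, -i z₂)` on `ℂ × ℂ`. -/
noncomputable def jmap (z : ℂ × ℂ) : ℂ × ℂ :=
  (Complex.I * z.1, -(Complex.I * z.2))

lemma normSq_sum {x : ℂ × ℂ} (hx : hNorm x = 1) :
    Complex.normSq x.1 + Complex.normSq x.2 = 1 := by
  have h0 : 0 ≤ Complex.normSq x.1 + Complex.normSq x.2 :=
    add_nonneg (Complex.normSq_nonneg _) (Complex.normSq_nonneg _)
  have := congrArg (· ^ 2) hx
  simpa [hNorm, Real.sq_sqrt h0] using this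

lemma re_comb {x v : ℂ × ℂ} (h1 : Complex.normSq x.1 + Complex.normSq x.2 = 1)
    (hxv : (hInner x v).re = 0) (a b : ℝ) :
    (hInner x (a • x + b • v)).re = a := by
  simp only [hInner, Complex.normSq_apply] at *
  simp only [Prod.fst_add, Prod.snd_add, Prod.smul_fst, Prod.smul_snd, Complex.real_smul,
    Complex.add_re, Complex.mul_re, Complex.mul_im, Complex.add_im, Complex.conj_re,
    Complex.conj_im, Complex.ofReal_re, Complex.ofReal_im] at *
  linear_combination a*h1 + b*hxv

lemma re_jx {x : ℂ × ℂ} : (hInner x (jmap x)).re = 0 := by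
  simp only [hInner, jmap, Complex.add_re, Complex.mul_re, Complex.mul_im,
    Complex.conj_re, Complex.conj_im, Complex.I_re, Complex.I_im, Complex.neg_re,
    Complex.neg_im]
  ring

lemma hNorm_jmap (x : ℂ × ℂ) : hNorm (jmap x) = hNorm x := by
  simp [hNorm, jmap, Complex.normSq_mul]

lemma hNorm_smul (b : ℝ) (v : ℂ × ℂ) : hNorm (b • v) = |b| * hNorm v := by
  have : ∀ z : ℂ, Complex.normSq ((b:ℂ) * z) = b^2 * Complex.normSq z := by
    intro z; rw [Complex.normSq_mul, Complex.normSq_ofReal]; ring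
  simp only [hNorm, Prod.smul_fst, Prod.smul_snd, Complex.real_smul, this]
  rw [← mul_add, Real.sqrt_mul (sq_nonneg b), Real.sqrt_sq_eq_abs]

lemma pair_zero {x : ℂ × ℂ} (hx : hNorm x = 1) (a b : ℝ)
    (h : a • x + b • jmap x = 0) : a = 0 ∧ b = 0 := by
  have h1 := normSq_sum hx
  have ha : a = 0 := by
    have h2 := re_comb h1 (re_jx (x := x)) a b
    rw [h] at h2
    simp [hInner] at h2
    exact h2.symm
  refine ⟨ha, ?_⟩
  subst ha
  rw [zero_smul, zero_add] at h
  have h3 := congrArg hNorm h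
  rw [hNorm_smul, hNorm_jmap, hx] at h3
  simp [hNorm] at h3
  simpa using h3

lemma sin_ne_zero (p : ℕ) (hp : 1 ≤ p) (hodd : Odd p) (q : ℤ) (hq : ¬ (p : ℤ) ∣ q) :
    Real.sin (2 * Real.pi * q / p) ≠ 0 := by
  intro h
  rw [Real.sin_eq_zero_iff] at h
  obtain ⟨n, hn⟩ := h
  have hp0 : (p : ℝ) ≠ 0 := by positivity
  have hpi := Real.pi_ne_zero
  have hr : (n : ℝ) * p = 2 * q := by
    have h2 : (n:ℝ) * Real.pi * p = 2 * Real.pi * q := by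
      field_simp at hn
      linear_combination Real.pi * hn
    have h3 : ((n:ℝ) * p) * Real.pi = (2 * q) * Real.pi := by linear_combination h2
    exact mul_right_cancel₀ hpi h3
  have hint : n * (p:ℤ) = 2 * q := by exact_mod_cast hr
  have hdvd : (p:ℤ) ∣ 2 * q := ⟨n, by linarith⟩
  have hcop : IsCoprime (p:ℤ) 2 := by
    rw [Int.isCoprime_iff_gcd_eq_one]
    have : Nat.Coprime p 2 := Nat.coprime_two_right.mpr hodd
    simpa [Int.gcd] using this
  exact hq (hcop.dvd_of_dvd_mul_left hdvd)

theorem stmt_5 (p : ℕ) (hp : 1 ≤ p) (hodd : Odd p) (q : ℤ) (hq : ¬ (p : ℤ) ∣ q)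
    (x v : ℂ × ℂ) (hx : hNorm x = 1) (hv : hNorm v = 1) (hxv : (hInner x v).re = 0)
    (hmem : Real.cos (2 * Real.pi * q / p) • x + Real.sin (2 * Real.pi * q / p) • jmap x
      ∈ Submodule.span ℝ ({x, v} : Set (ℂ × ℂ))) :
    Submodule.span ℝ ({x, v} : Set (ℂ × ℂ))
      = Submodule.span ℝ ({x, jmap x} : Set (ℂ × ℂ)) ∧
    LinearIndependent ℝ
      ![x, Real.cos (2 * Real.pi * q / p) • x + Real.sin (2 * Real.pi * q / p) • jmap x] := by
  have hsin : Real.sin (2 * Real.pi * q / p) ≠ 0 := sin_ne_zero p hp hodd q hq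
  have h1 := normSq_sum hx
  have hxmem : x ∈ Submodule.span ℝ ({x, v} : Set (ℂ × ℂ)) := Submodule.subset_span (by simp)
  have hjx : jmap x ∈ Submodule.span ℝ ({x, v} : Set (ℂ × ℂ)) := by
    have h2 : Real.sin (2 * Real.pi * q / p) • jmap x ∈
        Submodule.span ℝ ({x, v} : Set (ℂ × ℂ)) := by
      have h3 := Submodule.sub_mem _ hmem
        (Submodule.smul_mem _ (Real.cos (2 * Real.pi * q / p)) hxmem)
      simpa using h3
    have h4 := Submodule.smul_mem _ (Real.sin (2 * Real.pi * q / p))⁻¹ h2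
    rwa [smul_smul, inv_mul_cancel₀ hsin, one_smul] at h4
  obtain ⟨a, b, hab⟩ := Submodule.mem_span_pair.mp hjx
  have ha : a = 0 := by
    have h2 := re_comb h1 hxv a b
    rw [hab, re_jx] at h2
    exact h2.symm
  subst ha
  rw [zero_smul, zero_add] at hab
  have hbne : b ≠ 0 := by
    intro hb0
    have h3 := congrArg hNorm hab
    rw [hNorm_smul, hv, hNorm_jmap, hx, hb0] at h3
    simp at h3
  have hveq : v = b⁻¹ • jmap x := by
    rw [← hab, smul_smul, inv_mul_cancel₀ hbne, one_smul]
  constructor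
  · apply le_antisymm
    · rw [Submodule.span_le]
      rintro y hy
      rcases hy with rfl | rfl
      · exact Submodule.subset_span (by simp)
      · rw [hveq]
        exact Submodule.smul_mem _ _ (Submodule.subset_span (by simp))
    · rw [Submodule.span_le]
      rintro y hy
      rcases hy with rfl | rfl
      · exact Submodule.subset_span (by simp)
      · rw [← hab]
        exact Submodule.smul_mem _ _ (Submodule.subset_span (by simp))
  · rw [linearIndependent_fin2]
    constructor
    · intro h0
      exact hsin (pair_zero hx _ _ h0).2
    · intro c hc
      simp only [Matrix.cons_val_one, Matrix.head_cons, Matrix.cons_val_zero] at hc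
      have h0 : (c * Real.cos (2 * Real.pi * q / p) - 1) • x
          + (c * Real.sin (2 * Real.pi * q / p)) • jmap x = 0 := by
        calc (c * Real.cos (2 * Real.pi * q / p) - 1) • x
              + (c * Real.sin (2 * Real.pi * q / p)) • jmap x
            = c • (Real.cos (2 * Real.pi * q / p) • x
              + Real.sin (2 * Real.pi * q / p) • jmap x) - x := by module
          _ = x - x := by rw [hc]
          _ = 0 := sub_self x
      obtain ⟨e1, e2⟩ := pair_zero hx _ _ h0
      have hcne : c ≠ 0 := by
        intro h; rw [h] at e1; simp at e1
      exact hsin (by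
        have := mul_eq_zero.mp e2
        tauto)
end

section
/- Let ε, k ∈ ℝ and let γ : ℝ → ℂ × ℂ be a twice-differentiable curve with ‖γ(t)‖ = 1 for all t satisfying γ''(t) − ε·(i·γ'(t)) + k·γ(t) = 0. Then the speed t ↦ ‖γ'(t)‖ and the contact angle t ↦ Im( conj(γ₁(t))·γ₁'(t) + conj(γ₂(t))·γ₂'(t) ) are constant functions of t. -/
open Complex

private lemma hasDerivAt_normSq' {f : ℝ → ℂ} {f' : ℂ} {t : ℝ} (hf : HasDerivAt f f' t) :
    HasDerivAt (fun t => Complex.normSq (f t))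
      (2 * (((starRingEnd ℂ) (f t)) * f').re) t := by
  have hre : HasDerivAt (fun t => (f t).re) f'.re t :=
    Complex.reCLM.hasFDerivAt.comp_hasDerivAt t hf
  have him : HasDerivAt (fun t => (f t).im) f'.im t :=
    Complex.imCLM.hasFDerivAt.comp_hasDerivAt t hf
  have h := (hre.mul hre).add (him.mul him)
  convert h using 1
  case e'_4 => rfl
  case e'_5 => rfl
  case e'_8 => rfl
  simp only [Complex.mul_re, Complex.conj_re, Complex.conj_im]
  ring

private lemma hasDerivAt_conj' {f : ℝ → ℂ} {f' : ℂ} {t : ℝ} (hf : HasDerivAt f f' t) :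
    HasDerivAt (fun t => (starRingEnd ℂ) (f t)) ((starRingEnd ℂ) f') t := by
  have h := (Complex.conjCLE.toContinuousLinearMap).hasFDerivAt.comp_hasDerivAt t hf
  exact h

theorem stmt_7 (ε k : ℝ) (γ : ℝ → ℂ × ℂ)
    (hdiff : Differentiable ℝ γ) (hdiff2 : Differentiable ℝ (deriv γ))
    (hsphere : ∀ t : ℝ, hNorm (γ t) = 1)
    (hode : ∀ t : ℝ, deriv (deriv γ) t - ε • (Complex.I • deriv γ t) + k • γ t = 0) :
    (∀ s t : ℝ, hNorm (deriv γ s) = hNorm (deriv γ t)) ∧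
    (∀ s t : ℝ,
      ((starRingEnd ℂ) (γ s).1 * (deriv γ s).1
        + (starRingEnd ℂ) (γ s).2 * (deriv γ s).2).im
      = ((starRingEnd ℂ) (γ t).1 * (deriv γ t).1
        + (starRingEnd ℂ) (γ t).2 * (deriv γ t).2).im) := by
  have hγ : ∀ t, HasDerivAt γ (deriv γ t) t := fun t => (hdiff t).hasDerivAt
  have hγ' : ∀ t, HasDerivAt (deriv γ) (deriv (deriv γ) t) t := fun t => (hdiff2 t).hasDerivAt
  have ha : ∀ t, HasDerivAt (fun t => (γ t).1) (deriv γ t).1 t :=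
    fun t => (ContinuousLinearMap.fst ℝ ℂ ℂ).hasFDerivAt.comp_hasDerivAt t (hγ t)
  have hb : ∀ t, HasDerivAt (fun t => (γ t).2) (deriv γ t).2 t :=
    fun t => (ContinuousLinearMap.snd ℝ ℂ ℂ).hasFDerivAt.comp_hasDerivAt t (hγ t)
  have ha' : ∀ t, HasDerivAt (fun t => (deriv γ t).1) (deriv (deriv γ) t).1 t :=
    fun t => (ContinuousLinearMap.fst ℝ ℂ ℂ).hasFDerivAt.comp_hasDerivAt t (hγ' t)
  have hb' : ∀ t, HasDerivAt (fun t => (deriv γ t).2) (deriv (deriv γ) t).2 t :=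
    fun t => (ContinuousLinearMap.snd ℝ ℂ ℂ).hasFDerivAt.comp_hasDerivAt t (hγ' t)
  -- ODE componentwise
  have hodeEq : ∀ t, deriv (deriv γ) t = ε • (Complex.I • deriv γ t) - k • γ t := by
    intro t
    have h := hode t
    linear_combination h
  have hode1 : ∀ t, (deriv (deriv γ) t).1 = (ε : ℂ) * (Complex.I * (deriv γ t).1)
      - (k : ℂ) * (γ t).1 := by
    intro t
    rw [hodeEq t]
    simp [Complex.real_smul]
  have hode2 : ∀ t, (deriv (deriv γ) t).2 = (ε : ℂ) * (Complex.I * (deriv γ t).2)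
      - (k : ℂ) * (γ t).2 := by
    intro t
    rw [hodeEq t]
    simp [Complex.real_smul]
  -- sphere condition
  have hS1 : ∀ t, Complex.normSq (γ t).1 + Complex.normSq (γ t).2 = 1 := by
    intro t
    have h := hsphere t
    unfold hNorm at h
    have h0 : (0:ℝ) ≤ Complex.normSq (γ t).1 + Complex.normSq (γ t).2 := add_nonneg (Complex.normSq_nonneg _) (Complex.normSq_nonneg _)
    nlinarith [Real.sq_sqrt h0]
  have hRe0 : ∀ t, ((starRingEnd ℂ) (γ t).1 * (deriv γ t).1).re
      + ((starRingEnd ℂ) (γ t).2 * (deriv γ t).2).re = 0 := by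
    intro t
    have hS : HasDerivAt (fun t => Complex.normSq (γ t).1 + Complex.normSq (γ t).2)
        (2 * (((starRingEnd ℂ) (γ t).1) * (deriv γ t).1).re
          + 2 * (((starRingEnd ℂ) (γ t).2) * (deriv γ t).2).re) t :=
      (hasDerivAt_normSq' (ha t)).add (hasDerivAt_normSq' (hb t))
    rw [show (fun t => Complex.normSq (γ t).1 + Complex.normSq (γ t).2) = fun _ => (1:ℝ)
      from funext hS1] at hS
    have := hS.unique (hasDerivAt_const t 1)
    linarith
  -- speed
  have hFder : ∀ t, HasDerivAt
      (fun t => Complex.normSq (deriv γ t).1 + Complex.normSq (deriv γ t).2) 0 t := by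
    intro t
    have h := (hasDerivAt_normSq' (ha' t)).add (hasDerivAt_normSq' (hb' t))
    convert h using 1
    case e'_4 => rfl
    case e'_5 => rfl
    case e'_8 => rfl
    have hr := hRe0 t
    rw [hode1 t, hode2 t]
    simp only [Complex.mul_re, Complex.mul_im, Complex.sub_re, Complex.sub_im,
      Complex.conj_re, Complex.conj_im, Complex.I_re, Complex.I_im,
      Complex.ofReal_re, Complex.ofReal_im] at hr ⊢
    ring_nf
    ring_nf at hr
    linear_combination (2*k) * hr
  have hFconst : ∀ s t : ℝ,
      Complex.normSq (deriv γ s).1 + Complex.normSq (deriv γ s).2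
        = Complex.normSq (deriv γ t).1 + Complex.normSq (deriv γ t).2 :=
    fun s t => is_const_of_deriv_eq_zero (fun x => (hFder x).differentiableAt)
      (fun x => (hFder x).deriv) s t
  -- contact angle
  have hGder : ∀ t, HasDerivAt
      (fun t => ((starRingEnd ℂ) (γ t).1 * (deriv γ t).1
        + (starRingEnd ℂ) (γ t).2 * (deriv γ t).2).im) 0 t := by
    intro t
    have h1 := (hasDerivAt_conj' (ha t)).mul (ha' t)
    have h2 := (hasDerivAt_conj' (hb t)).mul (hb' t)
    have h := Complex.imCLM.hasFDerivAt.comp_hasDerivAt t (h1.add h2)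
    convert h using 1
    case e'_4 => rfl
    case e'_5 => rfl
    case e'_8 => rfl
    have hr := hRe0 t
    rw [hode1 t, hode2 t]
    simp only [ContinuousLinearMap.coe_coe, Complex.imCLM_apply, Complex.add_im,
      Complex.mul_im, Complex.mul_re, Complex.sub_re, Complex.sub_im,
      Complex.conj_re, Complex.conj_im, Complex.I_re, Complex.I_im,
      Complex.ofReal_re, Complex.ofReal_im] at hr ⊢
    ring_nf
    ring_nf at hr
    linear_combination (-ε) * hr
  constructor
  · intro s t
    unfold hNorm
    rw [hFconst s t]
  · intro s t
    exact is_const_of_deriv_eq_zero (fun x => (hGder x).differentiableAt)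
      (fun x => (hGder x).deriv) s t
end

section
/- Let ε > 0 and let γ : ℝ → ℂ × ℂ be a nonconstant twice-differentiable curve with ‖γ(t)‖ = 1 for all t. Set c := ‖γ'(0)‖ and δ := Im( conj(γ₁(0))·γ₁'(0) + conj(γ₂(0))·γ₂'(0) ), and suppose γ''(t) − ε·(i·γ'(t)) + (c² − ε·δ)·γ(t) = 0 for all t. If γ(t + T) = γ(t) for all t ∈ ℝ for some T > 0, then T ≥ 2π/c in the case c ≥ ε, and T ≥ 2π/ε in the case c ≤ ε. -/
open Complex

lemma hNorm_nonneg (x : ℂ × ℂ) : 0 ≤ hNorm x := Real.sqrt_nonneg _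

lemma hNorm_sq (x : ℂ × ℂ) : hNorm x ^ 2 = Complex.normSq x.1 + Complex.normSq x.2 :=
  Real.sq_sqrt (add_nonneg (Complex.normSq_nonneg _) (Complex.normSq_nonneg _))

lemma hNorm_smul_s9 (z : ℂ) (x : ℂ × ℂ) : hNorm (z • x) = ‖z‖ * hNorm x := by
  unfold hNorm
  have h1 : (z • x).1 = z * x.1 := rfl
  have h2 : (z • x).2 = z * x.2 := rfl
  rw [h1, h2, Complex.normSq_mul, Complex.normSq_mul, ← mul_add,
    Real.sqrt_mul (Complex.normSq_nonneg z), Complex.norm_def]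

lemma eq_zero_of_hNorm (x : ℂ × ℂ) (h : hNorm x = 0) : x = 0 := by
  have h0 : Complex.normSq x.1 + Complex.normSq x.2 = 0 := by
    have := hNorm_sq x
    rw [h] at this; simpa using this.symm
  have h1 : Complex.normSq x.1 = 0 := by nlinarith [Complex.normSq_nonneg x.1, Complex.normSq_nonneg x.2]
  have h2 : Complex.normSq x.2 = 0 := by nlinarith [Complex.normSq_nonneg x.1, Complex.normSq_nonneg x.2]
  exact Prod.ext (by simpa using Complex.normSq_eq_zero.mp h1) (by simpa using Complex.normSq_eq_zero.mp h2)

lemma real_smul_pair (r : ℝ) (x : ℂ × ℂ) : r • x = (r : ℂ) • x := by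
  ext <;> simp [Complex.real_smul]

lemma hasDerivAt_cexp_mul (lam : ℂ) (t : ℝ) :
    HasDerivAt (fun t : ℝ => Complex.exp (lam * t)) (lam * Complex.exp (lam * t)) t := by
  have h1 : HasDerivAt (fun t : ℝ => (t : ℂ)) 1 t := Complex.ofRealCLM.hasDerivAt
  simpa [mul_comm] using (h1.const_mul lam).cexp

/-- Solution of the linear equation u' = λ u with values in ℂ × ℂ. -/
lemma solve_linear (lam : ℂ) (u : ℝ → ℂ × ℂ)
    (hu : ∀ t, HasDerivAt u (lam • u t) t) (t : ℝ) :
    u t = Complex.exp (lam * t) • u 0 := by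
  set v : ℝ → ℂ × ℂ := fun t => Complex.exp (-lam * t) • u t with hv
  have hvd : ∀ s, HasDerivAt v 0 s := by
    intro s
    have h1 := (hasDerivAt_cexp_mul (-lam) s).smul (hu s)
    have : Complex.exp (-lam * s) • (lam • u s) + (-lam * Complex.exp (-lam * s)) • u s = 0 := by
      rw [smul_smul, ← add_smul]
      have : Complex.exp (-lam * s) * lam + -lam * Complex.exp (-lam * s) = 0 := by ring
      rw [this, zero_smul]
    rwa [this] at h1
  have hconst : v t = v 0 :=
    is_const_of_deriv_eq_zero (fun s => (hvd s).differentiableAt) (fun s => (hvd s).deriv) t 0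
  have hv0 : v 0 = u 0 := by simp [hv]
  have : Complex.exp (lam * t) • v t = u t := by
    rw [hv, smul_smul, ← Complex.exp_add]
    have : lam * t + -lam * t = 0 := by ring
    rw [this, Complex.exp_zero, one_smul]
  rw [← this, hconst, hv0]

/-- If exp(λT) = 1 with T > 0, then λ = iω with ωT ∈ 2πℤ. -/
lemma freq_of_exp_eq_one (lam : ℂ) (T : ℝ) (hT : 0 < T) (h : Complex.exp (lam * T) = 1) :
    ∃ ω : ℝ, lam = ω * I ∧ ∃ k : ℤ, ω * T = 2 * Real.pi * k := by
  obtain ⟨n, hn⟩ := Complex.exp_eq_one_iff.mp h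
  refine ⟨2 * Real.pi * n / T, ?_, n, by field_simp⟩
  have hT0 : (T : ℂ) ≠ 0 := by exact_mod_cast hT.ne'
  push_cast
  field_simp
  linear_combination hn

lemma eq_zero_of_normSq_sum (x : ℂ × ℂ) (h : Complex.normSq x.1 + Complex.normSq x.2 = 0) :
    x = 0 := by
  have h1 : Complex.normSq x.1 = 0 := by
    nlinarith [Complex.normSq_nonneg x.1, Complex.normSq_nonneg x.2]
  have h2 : Complex.normSq x.2 = 0 := by
    nlinarith [Complex.normSq_nonneg x.1, Complex.normSq_nonneg x.2]
  exact Prod.ext (by simpa using Complex.normSq_eq_zero.mp h1)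
    (by simpa using Complex.normSq_eq_zero.mp h2)

noncomputable def inn (x y : ℂ × ℂ) : ℂ :=
  starRingEnd ℂ x.1 * y.1 + starRingEnd ℂ x.2 * y.2

lemma inn_self (x : ℂ × ℂ) : inn x x = ((hNorm x ^ 2 : ℝ) : ℂ) := by
  rw [hNorm_sq]
  push_cast
  simp [inn, Complex.normSq_eq_conj_mul_self]

lemma inn_conj (x y : ℂ × ℂ) : starRingEnd ℂ (inn x y) = inn y x := by
  simp [inn, map_add, map_mul]
  ring

lemma inn_expand (p q p' q' : ℂ) (A B : ℂ × ℂ) :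
    inn (p • A + q • B) (p' • A + q' • B)
      = starRingEnd ℂ p * p' * inn A A + starRingEnd ℂ p * q' * inn A B
        + starRingEnd ℂ q * p' * inn B A + starRingEnd ℂ q * q' * inn B B := by
  have e1 : (p • A + q • B).1 = p * A.1 + q * B.1 := rfl
  have e2 : (p • A + q • B).2 = p * A.2 + q * B.2 := rfl
  have e3 : (p' • A + q' • B).1 = p' * A.1 + q' * B.1 := rfl
  have e4 : (p' • A + q' • B).2 = p' * A.2 + q' * B.2 := rfl
  simp only [inn, e1, e2, e3, e4, map_add, map_mul]
  ring

lemma period_bound (ω T : ℝ) (hT : 0 < T) (k : ℤ) (h : ω * T = 2 * Real.pi * k)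
    (hω : ω ≠ 0) : 2 * Real.pi ≤ |ω| * T := by
  have hk : k ≠ 0 := by
    intro h0
    rw [h0] at h
    simp at h
    rcases h with h | h
    · exact hω h
    · exact hT.ne' h
  have hk1 : (1 : ℝ) ≤ |(k : ℝ)| := by
    have : (1 : ℤ) ≤ |k| := Int.one_le_abs hk
    calc (1:ℝ) = ((1:ℤ):ℝ) := by norm_num
    _ ≤ ((|k|:ℤ):ℝ) := by exact_mod_cast this
    _ = |(k:ℝ)| := by push_cast; ring
  have habs : |ω| * T = 2 * Real.pi * |(k : ℝ)| := by
    have := congrArg (fun x : ℝ => |x|) h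
    rw [abs_mul, abs_of_pos hT] at this
    rw [this, abs_mul, abs_mul]
    rw [abs_of_pos (by norm_num : (0:ℝ) < 2), abs_of_pos Real.pi_pos]
  rw [habs]
  nlinarith [Real.pi_pos]

/-- Single-frequency case: if γ' = λ·γ with γ periodic and nonconstant, then
`|λ| > 0` and `2π ≤ |λ| T`. -/
lemma single_freq (γ : ℝ → ℂ × ℂ) (lam : ℂ)
    (hder : ∀ t, HasDerivAt γ (lam • γ t) t)
    (hγ0 : γ 0 ≠ 0) (T : ℝ) (hT : 0 < T) (hperT : γ T = γ 0)
    (hnc : ∃ s t : ℝ, γ s ≠ γ t) :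
    0 < ‖lam‖ ∧ 2 * Real.pi ≤ ‖lam‖ * T := by
  have hsol := solve_linear lam γ hder
  have hlam : lam ≠ 0 := by
    intro h0
    obtain ⟨s, t, hst⟩ := hnc
    apply hst
    rw [hsol s, hsol t, h0]
    simp
  have hexp : Complex.exp (lam * T) = 1 := by
    have h1 : Complex.exp (lam * T) • γ 0 = γ 0 := by rw [← hsol T, hperT]
    have h2 : (Complex.exp (lam * T) - 1) • γ 0 = 0 := by
      rw [sub_smul, one_smul, h1, sub_self]
    rcases smul_eq_zero.mp h2 with h | h
    · exact sub_eq_zero.mp h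
    · exact absurd h hγ0
  obtain ⟨ω, hω, k, hk⟩ := freq_of_exp_eq_one lam T hT hexp
  have hωne : ω ≠ 0 := by
    intro h0
    rw [h0] at hω
    simp at hω
    exact hlam hω
  have habs : ‖lam‖ = |ω| := by
    rw [hω, norm_mul, Complex.norm_I, Complex.norm_real, Real.norm_eq_abs, mul_one]
  rw [habs]
  exact ⟨abs_pos.mpr hωne, period_bound ω T hT k hk hωne⟩

lemma conj_exp_omega (ω t : ℝ) :
    starRingEnd ℂ (Complex.exp ((ω:ℂ) * I * t)) = Complex.exp (-((ω:ℂ) * I * t)) := by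
  rw [← Complex.exp_conj]
  congr 1
  simp [map_mul, Complex.conj_I, Complex.conj_ofReal]

lemma abs_le_of_sq_le (x y : ℝ) (hy : 0 ≤ y) (h : x^2 ≤ y^2) : |x| ≤ y := by
  nlinarith [_root_.sq_abs x, abs_nonneg x]

set_option maxHeartbeats 1000000 in
theorem stmt_9 (ε : ℝ) (hε : 0 < ε) (γ : ℝ → ℂ × ℂ)
    (hdiff : Differentiable ℝ γ) (hdiff2 : Differentiable ℝ (deriv γ))
    (hnonconst : ∃ s t : ℝ, γ s ≠ γ t)
    (hsphere : ∀ t : ℝ, hNorm (γ t) = 1)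
    (c δ : ℝ) (hc : c = hNorm (deriv γ 0))
    (hδ : δ = ((starRingEnd ℂ) (γ 0).1 * (deriv γ 0).1
      + (starRingEnd ℂ) (γ 0).2 * (deriv γ 0).2).im)
    (hode : ∀ t : ℝ, deriv (deriv γ) t - ε • (Complex.I • deriv γ t)
      + (c ^ 2 - ε * δ) • γ t = 0)
    (T : ℝ) (hT : 0 < T) (hper : ∀ t : ℝ, γ (t + T) = γ t) :
    (ε ≤ c → T ≥ 2 * Real.pi / c) ∧ (c ≤ ε → T ≥ 2 * Real.pi / ε) := by
  -- It suffices to establish one of two bounds.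
  suffices h : (0 < c ∧ 2 * Real.pi ≤ c * T) ∨ (c < ε ∧ 2 * Real.pi ≤ ε * T) by
    rcases h with ⟨hc0, hcT⟩ | ⟨hcε, hεT⟩
    · constructor
      · intro _
        rw [ge_iff_le, div_le_iff₀ hc0]
        linarith [mul_comm c T]
      · intro hcε
        rw [ge_iff_le, div_le_iff₀ hε]
        nlinarith
    · constructor
      · intro h'; linarith
      · intro _
        rw [ge_iff_le, div_le_iff₀ hε]
        linarith [mul_comm ε T]
  -- Basic facts
  have hγ0n : hNorm (γ 0) = 1 := hsphere 0
  have hγ0 : γ 0 ≠ 0 := by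
    intro h
    rw [h] at hγ0n
    simp [hNorm] at hγ0n
  have hcnn : 0 ≤ c := hc ▸ hNorm_nonneg _
  -- roots of the characteristic polynomial
  set μ : ℂ := ((c ^ 2 - ε * δ : ℝ) : ℂ) with hμdef
  obtain ⟨s, hs⟩ := Complex.isAlgClosed.exists_pow_nat_eq (-(ε:ℂ)^2 - 4*μ) (n := 2) (by norm_num)
  set lp : ℂ := (I * ε + s) / 2 with hlpdef
  set lm : ℂ := (I * ε - s) / 2 with hlmdef
  have hsum : lp + lm = I * ε := by rw [hlpdef, hlmdef]; ring
  have hprod : lp * lm = μ := by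
    rw [hlpdef, hlmdef]
    have : (I * ↑ε + s) / 2 * ((I * ↑ε - s) / 2) = ((I*ε)^2 - s^2)/4 := by ring
    rw [this, hs]
    rw [mul_pow, I_sq]
    ring
  have hdiffls : lp - lm = s := by rw [hlpdef, hlmdef]; ring
  -- rewritten ODE
  have hode' : ∀ t, deriv (deriv γ) t = (I * ↑ε) • deriv γ t - μ • γ t := by
    intro t
    have h := hode t
    rw [sub_add, sub_eq_zero] at h
    rw [h, real_smul_pair, real_smul_pair, smul_smul, mul_comm (ε:ℂ) I]
  -- the two auxiliary functions
  set f : ℝ → ℂ × ℂ := fun t => deriv γ t - lm • γ t with hfdef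
  set g : ℝ → ℂ × ℂ := fun t => deriv γ t - lp • γ t with hgdef
  have hfd : ∀ t, HasDerivAt f (lp • f t) t := by
    intro t
    have h2 : HasDerivAt (deriv γ) (deriv (deriv γ) t) t := (hdiff2 t).hasDerivAt
    have h3 : HasDerivAt (fun t => lm • γ t) (lm • deriv γ t) t :=
      (hdiff t).hasDerivAt.const_smul lm
    have h4 := h2.sub h3
    refine h4.congr_deriv ?_
    rw [hode' t, hfdef]
    simp only [smul_sub, smul_smul]
    rw [← hprod, ← hsum, add_smul]
    abel
  have hgd : ∀ t, HasDerivAt g (lm • g t) t := by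
    intro t
    have h2 : HasDerivAt (deriv γ) (deriv (deriv γ) t) t := (hdiff2 t).hasDerivAt
    have h3 : HasDerivAt (fun t => lp • γ t) (lp • deriv γ t) t :=
      (hdiff t).hasDerivAt.const_smul lp
    have h4 := h2.sub h3
    refine h4.congr_deriv ?_
    rw [hode' t, hgdef]
    simp only [smul_sub, smul_smul]
    rw [← hprod, ← hsum, add_smul, mul_comm lm lp]
    abel
  have hfsol : ∀ t, f t = Complex.exp (lp * t) • f 0 := solve_linear lp f hfd
  have hgsol : ∀ t, g t = Complex.exp (lm * t) • g 0 := solve_linear lm g hgd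
  -- periodicity of the derivative
  have hper' : ∀ t, deriv γ (t + T) = deriv γ t := by
    intro t
    have hfun : (fun s => γ (s + T)) = γ := funext hper
    calc deriv γ (t + T) = deriv (fun s => γ (s + T)) t := (deriv_comp_add_const γ T t).symm
    _ = deriv γ t := by rw [hfun]
  have hfT : f T = f 0 := by
    rw [hfdef]
    simp only []
    have h1 : deriv γ T = deriv γ 0 := by
      have := hper' 0; rwa [zero_add] at this
    have h2 : γ T = γ 0 := by
      have := hper 0; rwa [zero_add] at this
    rw [h1, h2]
  have hgT : g T = g 0 := by
    rw [hgdef]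
    simp only []
    have h1 : deriv γ T = deriv γ 0 := by
      have := hper' 0; rwa [zero_add] at this
    have h2 : γ T = γ 0 := by
      have := hper 0; rwa [zero_add] at this
    rw [h1, h2]
  have hexp_of : ∀ (lam : ℂ) (u : ℝ → ℂ × ℂ), (∀ t, u t = Complex.exp (lam * t) • u 0) →
      u T = u 0 → u 0 ≠ 0 → Complex.exp (lam * T) = 1 := by
    intro lam u hsol huT hu0
    have h2 : (Complex.exp (lam * T) - 1) • u 0 = 0 := by
      rw [sub_smul, one_smul, ← hsol T, huT, sub_self]
    rcases smul_eq_zero.mp h2 with h | h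
    · exact sub_eq_zero.mp h
    · exact absurd h hu0
  -- convenient closer for the single-frequency situations
  have hγT : γ T = γ 0 := by have := hper 0; rwa [zero_add] at this
  have main_single : ∀ lam : ℂ, (∀ t, deriv γ t = lam • γ t) →
      (0 < c ∧ 2 * Real.pi ≤ c * T) := by
    intro lam hl
    have hder : ∀ t, HasDerivAt γ (lam • γ t) t := fun t => hl t ▸ (hdiff t).hasDerivAt
    obtain ⟨h1, h2⟩ := single_freq γ lam hder hγ0 T hT hγT hnonconst
    have hcabs : c = ‖lam‖ := by
      rw [hc, hl 0, hNorm_smul_s9, hγ0n, mul_one]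
    rw [hcabs]
    exact ⟨h1, h2⟩
  by_cases hs0 : s = 0
  · -- repeated root case: lp = lm = I ε / 2
    have hlplm : lp = lm := by rw [hlpdef, hlmdef, hs0]; ring
    have hlpval : lp = ((ε/2 : ℝ) : ℂ) * I := by
      rw [hlpdef, hs0]; push_cast; ring
    -- show f 0 = 0 using boundedness of γ
    have hhd : ∀ t, HasDerivAt (fun t : ℝ => Complex.exp (-lp * t) • γ t) (f 0) t := by
      intro t
      have h1 := (hasDerivAt_cexp_mul (-lp) t).smul (hdiff t).hasDerivAt
      refine h1.congr_deriv ?_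
      have e1 : Complex.exp (-lp * t) • f t = f 0 := by
        rw [hfsol t, smul_smul, ← Complex.exp_add]
        have : -lp * t + lp * t = 0 := by ring
        rw [this, Complex.exp_zero, one_smul]
      rw [← e1, hfdef]
      simp only []
      rw [← hlplm]
      module
    have hline : ∀ t : ℝ, Complex.exp (-lp * t) • γ t = γ 0 + t • f 0 := by
      intro t
      have hsub : ∀ u : ℝ, HasDerivAt
          (fun u : ℝ => Complex.exp (-lp * u) • γ u - u • f 0) 0 u := by
        intro u
        have h2 : HasDerivAt (fun u : ℝ => u • f 0) (f 0) u := by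
          simpa using (hasDerivAt_id u).smul_const (f 0)
        exact ((hhd u).sub h2).congr_deriv (sub_self _)
      have hconst := is_const_of_deriv_eq_zero
        (fun u => (hsub u).differentiableAt) (fun u => (hsub u).deriv) t 0
      simp only [Complex.ofReal_zero, mul_zero, Complex.exp_zero, one_smul, zero_smul,
        sub_zero] at hconst
      have : Complex.exp (-lp * t) • γ t - t • f 0 = γ 0 := hconst
      linear_combination (norm := module) this
    have hQ : ∀ t : ℝ, hNorm (γ 0 + t • f 0) = 1 := by
      intro t
      rw [← hline t, hNorm_smul_s9, hsphere t, mul_one]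
      rw [Complex.norm_exp]
      have : (-lp * (t:ℂ)).re = 0 := by
        rw [hlpval]; simp
      rw [this, Real.exp_zero]
    have hf00 : f 0 = 0 := by
      apply eq_zero_of_normSq_sum
      have q : ∀ t : ℝ, Complex.normSq ((γ 0).1 + (t:ℂ) * (f 0).1)
          + Complex.normSq ((γ 0).2 + (t:ℂ) * (f 0).2) = 1 := by
        intro t
        have h1 := hQ t
        have h2 : hNorm (γ 0 + t • f 0) ^ 2 = 1 := by rw [h1]; norm_num
        rw [hNorm_sq] at h2
        have e1 : (γ 0 + t • f 0).1 = (γ 0).1 + (t:ℂ) * (f 0).1 := by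
          rw [real_smul_pair]; rfl
        have e2 : (γ 0 + t • f 0).2 = (γ 0).2 + (t:ℂ) * (f 0).2 := by
          rw [real_smul_pair]; rfl
        rw [e1, e2] at h2
        exact h2
      have q1 := q 1
      have q2 := q (-1)
      have q0 := q 0
      simp only [Complex.ofReal_one, one_mul, Complex.ofReal_neg, Complex.ofReal_zero,
        zero_mul, add_zero, neg_one_mul] at q1 q2 q0
      rw [Complex.normSq_add, Complex.normSq_add] at q1
      rw [← sub_eq_add_neg, ← sub_eq_add_neg, Complex.normSq_sub, Complex.normSq_sub] at q2
      linarith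
    have hfz : ∀ t, deriv γ t = lm • γ t := by
      intro t
      have : f t = 0 := by rw [hfsol t, hf00, smul_zero]
      have h2 : deriv γ t - lm • γ t = 0 := this
      exact sub_eq_zero.mp h2
    exact Or.inl (main_single lm hfz)
  · -- distinct roots
    by_cases hg0 : g 0 = 0
    · -- only the lp frequency is present
      have hgz : ∀ t, deriv γ t = lp • γ t := by
        intro t
        have : g t = 0 := by rw [hgsol t, hg0, smul_zero]
        exact sub_eq_zero.mp this
      exact Or.inl (main_single lp hgz)
    by_cases hf0 : f 0 = 0
    · -- only the lm frequency is present
      have hfz : ∀ t, deriv γ t = lm • γ t := by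
        intro t
        have : f t = 0 := by rw [hfsol t, hf0, smul_zero]
        exact sub_eq_zero.mp this
      exact Or.inl (main_single lm hfz)
    -- both frequencies present
    have hexpp := hexp_of lp f hfsol hfT hf0
    have hexpm := hexp_of lm g hgsol hgT hg0
    obtain ⟨ωp, hlpv, k, hk⟩ := freq_of_exp_eq_one lp T hT hexpp
    obtain ⟨ωm, hlmv, m, hm⟩ := freq_of_exp_eq_one lm T hT hexpm
    have hωsum : ωp + ωm = ε := by
      have h := hsum
      rw [hlpv, hlmv] at h
      have h2 : ((ωp + ωm : ℝ) : ℂ) * I = (ε:ℂ) * I := by push_cast; linear_combination h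
      have h3 := mul_right_cancel₀ I_ne_zero h2
      exact_mod_cast h3
    have hωne : ωp ≠ ωm := by
      intro h
      apply hs0
      rw [← hdiffls, hlpv, hlmv, h]
      ring
    set A : ℂ × ℂ := s⁻¹ • f 0 with hA
    set B : ℂ × ℂ := (-s⁻¹) • g 0 with hB
    have hAne : A ≠ 0 := smul_ne_zero (inv_ne_zero hs0) hf0
    have hBne : B ≠ 0 := smul_ne_zero (neg_ne_zero.mpr (inv_ne_zero hs0)) hg0
    have hrep : ∀ t, γ t = Complex.exp (lp * t) • A + Complex.exp (lm * t) • B := by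
      intro t
      have h1 : f t - g t = s • γ t := by
        rw [hfdef, hgdef]
        simp only []
        rw [← hdiffls, sub_smul]
        abel
      have h2 : γ t = s⁻¹ • (f t - g t) := by rw [h1, inv_smul_smul₀ hs0]
      rw [h2, hfsol, hgsol, hA, hB]
      module
    have hγ00 : γ 0 = A + B := by
      have := hrep 0
      simpa using this
    have hγp0 : deriv γ 0 = lp • A + lm • B := by
      have h1 : deriv γ 0 = f 0 + lm • γ 0 := by
        rw [hfdef]; simp only []; abel
      have hf0A : f 0 = s • A := (smul_inv_smul₀ hs0 _).symm
      rw [h1, hf0A, hγ00, show lp = s + lm by rw [← hdiffls]; ring]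
      module
    -- inner product analysis
    set w : ℂ := inn A B with hw
    set a : ℝ := hNorm A ^ 2 with ha
    set b : ℝ := hNorm B ^ 2 with hb
    set θ : ℝ := ωm - ωp with hθ
    have hθ0 : θ ≠ 0 := sub_ne_zero.mpr (Ne.symm hωne)
    have hR : ∀ t : ℝ, a + b + 2 * (Complex.exp ((θ:ℂ) * I * t) * w).re = 1 := by
      intro t
      have h := hsphere t
      have h1 : inn (γ t) (γ t) = 1 := by
        rw [inn_self, h]; norm_num
      rw [hrep t, hlpv, hlmv] at h1
      rw [show ((ωp:ℂ) * I) * (t:ℂ) = (ωp:ℂ) * I * t from rfl] at h1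
      rw [inn_expand, conj_exp_omega, conj_exp_omega] at h1
      have e1 : Complex.exp (-((ωp:ℂ)*I*t)) * Complex.exp ((ωp:ℂ)*I*t) = 1 := by
        rw [← Complex.exp_add, neg_add_cancel, Complex.exp_zero]
      have e4 : Complex.exp (-((ωm:ℂ)*I*t)) * Complex.exp ((ωm:ℂ)*I*t) = 1 := by
        rw [← Complex.exp_add, neg_add_cancel, Complex.exp_zero]
      have e2 : Complex.exp (-((ωp:ℂ)*I*t)) * Complex.exp ((ωm:ℂ)*I*t)
          = Complex.exp ((θ:ℂ) * I * t) := by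
        rw [← Complex.exp_add]
        congr 1
        rw [hθ]; push_cast; ring
      have e3 : Complex.exp (-((ωm:ℂ)*I*t)) * Complex.exp ((ωp:ℂ)*I*t)
          = Complex.exp (-((θ:ℂ) * I * t)) := by
        rw [← Complex.exp_add]
        congr 1
        rw [hθ]; push_cast; ring
      rw [e1, e2, e3, e4, one_mul, one_mul, inn_self A, inn_self B,
        ← inn_conj A B, ← hw, ← ha, ← hb] at h1
      have hcj : Complex.exp (-((θ:ℂ)*I*t)) * starRingEnd ℂ w
          = starRingEnd ℂ (Complex.exp ((θ:ℂ)*I*t) * w) := by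
        rw [map_mul, conj_exp_omega]
      rw [hcj] at h1
      have h2 := congrArg Complex.re h1
      simp only [Complex.add_re, Complex.ofReal_re, Complex.conj_re, Complex.one_re] at h2
      linarith
    have hw0 : w = 0 := by
      have h0 := hR 0
      have hpi := hR (Real.pi / θ)
      have hpi2 := hR (Real.pi / (2 * θ))
      have E0 : ((θ:ℂ) * I * ((0:ℝ):ℂ)) = 0 := by simp
      rw [E0, Complex.exp_zero, one_mul] at h0
      have hθC : (θ:ℂ) ≠ 0 := Complex.ofReal_ne_zero.mpr hθ0
      have Epi : ((θ:ℂ) * I * ((Real.pi/θ : ℝ):ℂ)) = (Real.pi:ℂ) * I := by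
        push_cast
        field_simp
      rw [Epi, Complex.exp_pi_mul_I] at hpi
      have Epi2 : ((θ:ℂ) * I * ((Real.pi/(2*θ) : ℝ):ℂ)) = ((Real.pi/2 : ℝ):ℂ) * I := by
        push_cast
        field_simp
      rw [Epi2] at hpi2
      have hexpI : Complex.exp (((Real.pi/2 : ℝ):ℂ) * I) = I := by
        simp [Complex.exp_mul_I]
      rw [hexpI] at hpi2
      have hre : w.re = 0 := by
        simp only [neg_one_mul, Complex.neg_re] at hpi
        linarith
      have him : w.im = 0 := by
        have : (I * w).re = -w.im := by simp [Complex.mul_re]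
        rw [this] at hpi2
        linarith
      exact Complex.ext hre him
    have hab1 : a + b = 1 := by
      have h0 := hR 0
      have E0 : ((θ:ℂ) * I * ((0:ℝ):ℂ)) = 0 := by simp
      rw [E0, Complex.exp_zero, one_mul, hw0] at h0
      simpa using h0
    have ha0 : 0 < a := by
      rw [ha]
      have : hNorm A ≠ 0 := fun h => hAne (eq_zero_of_hNorm A h)
      positivity
    have hb0 : 0 < b := by
      rw [hb]
      have : hNorm B ≠ 0 := fun h => hBne (eq_zero_of_hNorm B h)
      positivity
    have hcr : c ^ 2 = ωp ^ 2 * a + ωm ^ 2 * b := by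
      have h1 : inn (deriv γ 0) (deriv γ 0) = ((c^2 : ℝ) : ℂ) := by
        rw [inn_self, hc]
      rw [hγp0, inn_expand, hlpv, hlmv, inn_self A, inn_self B, ← inn_conj A B,
        ← hw, hw0, ← ha, ← hb] at h1
      have h2 : ((c^2 : ℝ) : ℂ) = (((ωp^2 * a + ωm^2 * b : ℝ)) : ℂ) := by
        rw [← h1]
        push_cast
        simp only [map_mul, map_zero, Complex.conj_ofReal, Complex.conj_I, mul_zero, zero_mul,
          add_zero, zero_add]
        ring_nf
        rw [Complex.I_sq]
        ring
      exact_mod_cast h2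
    -- final case analysis on the frequencies
    clear_value A B a b w
    clear hrep hR hw0 hγ00 hγp0 hAne hBne hA hB hw ha hb hfsol hgsol hfd hgd hfT hgT
      hexpp hexpm hexp_of hode hode' hsphere hγT main_single hδ hper hper' hγ0 hs hsum
      hprod hdiffls hlpv hlmv hθ0 hfdef hgdef hlpdef hlmdef hμdef hf0 hg0 hs0 w A B f g lp lm μ s
    rcases eq_or_ne ωp 0 with hp0 | hp0
    · -- ωp = 0, ωm = ε, c < ε
      have hmε : ωm = ε := by rw [hp0] at hωsum; linarith
      rw [hp0, hmε] at hcr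
      refine Or.inr ⟨?_, ?_⟩
      · nlinarith [hcr, ha0, hb0, hab1, hcnn, hε, mul_pos (mul_pos hε hε) ha0]
      · have := period_bound ωm T hT m hm (by rw [hmε]; exact hε.ne')
        rwa [hmε, abs_of_pos hε] at this
    rcases eq_or_ne ωm 0 with hm0 | hm0
    · -- ωm = 0, ωp = ε, c < ε
      have hpε : ωp = ε := by rw [hm0] at hωsum; linarith
      rw [hm0, hpε] at hcr
      refine Or.inr ⟨?_, ?_⟩
      · nlinarith [hcr, ha0, hb0, hab1, hcnn, hε, mul_pos (mul_pos hε hε) hb0]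
      · have := period_bound ωp T hT k hk (by rw [hpε]; exact hε.ne')
        rwa [hpε, abs_of_pos hε] at this
    · -- both frequencies nonzero
      have hbp := period_bound ωp T hT k hk hp0
      have hbm := period_bound ωm T hT m hm hm0
      rcases le_total |ωp| |ωm| with hle | hle
      · have hsq2 : ωp^2 ≤ ωm^2 := by
          nlinarith [mul_self_le_mul_self (abs_nonneg ωp) hle, _root_.sq_abs ωp,
            _root_.sq_abs ωm]
        have hmul : ωp^2 * b ≤ ωm^2 * b := mul_le_mul_of_nonneg_right hsq2 hb0.le
        have hkey : ωp^2 * a + ωp^2 * b = ωp^2 := by rw [← mul_add, hab1, mul_one]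
        have hsqle : ωp^2 ≤ c^2 := by linarith
        have h1 : |ωp| ≤ c := abs_le_of_sq_le ωp c hcnn hsqle
        refine Or.inl ⟨lt_of_lt_of_le (abs_pos.mpr hp0) h1, ?_⟩
        calc 2 * Real.pi ≤ |ωp| * T := hbp
        _ ≤ c * T := mul_le_mul_of_nonneg_right h1 hT.le
      · have hsq2 : ωm^2 ≤ ωp^2 := by
          nlinarith [mul_self_le_mul_self (abs_nonneg ωm) hle, _root_.sq_abs ωp,
            _root_.sq_abs ωm]
        have hmul : ωm^2 * a ≤ ωp^2 * a := mul_le_mul_of_nonneg_right hsq2 ha0.le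
        have hkey : ωm^2 * a + ωm^2 * b = ωm^2 := by rw [← mul_add, hab1, mul_one]
        have hsqle : ωm^2 ≤ c^2 := by linarith
        have h1 : |ωm| ≤ c := abs_le_of_sq_le ωm c hcnn hsqle
        refine Or.inl ⟨lt_of_lt_of_le (abs_pos.mpr hm0) h1, ?_⟩
        calc 2 * Real.pi ≤ |ωm| * T := hbm
        _ ≤ c * T := mul_le_mul_of_nonneg_right h1 hT.le
end

section
/- Let ε > 0 and let p ≥ 3 be an odd integer. Let γ : ℝ → ℂ × ℂ be a nonconstant twice-differentiable curve with ‖γ(t)‖ = 1 for all t, set c := ‖γ'(0)‖ and δ := Im( conj(γ₁(0))·γ₁'(0) + conj(γ₂(0))·γ₂'(0) ), and suppose γ''(t) − ε·(i·γ'(t)) + (c² − ε·δ)·γ(t) = 0 for all t. If there exists S > 0 such that (e^{2πi/p}·γ₁(t), e^{−2πi/p}·γ₂(t)) = γ(t + S) for all t ∈ ℝ, then γ₁ ≡ 0, or γ₂ ≡ 0, or S ≥ 2π/ε. -/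
open Complex

/-- Scalar constant-coefficient second order ODE: integrating factor identity. -/
lemma ode_scalar (h h' h'' : ℝ → ℂ)
    (hd1 : ∀ t, HasDerivAt h (h' t) t)
    (hd2 : ∀ t, HasDerivAt h' (h'' t) t)
    (e K : ℂ) (hODE : ∀ t, h'' t - e * (Complex.I * h' t) + K * h t = 0)
    (a b : ℝ) (hsum : (a : ℂ) + b = e) (hmul : -((a : ℂ) * b) = K) :
    ∀ t : ℝ, h' t - (b : ℂ) * Complex.I * h t
      = Complex.exp ((a : ℂ) * t * Complex.I) * (h' 0 - (b : ℂ) * Complex.I * h 0) := by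
  have hd0 : ∀ t : ℝ, HasDerivAt
      (fun s : ℝ => Complex.exp (-((a : ℂ) * s * Complex.I))
        * (h' s - (b : ℂ) * Complex.I * h s)) 0 t := by
    intro t
    have h0 : HasDerivAt (fun s : ℝ => ((s : ℂ))) 1 t := by
      exact Complex.ofRealCLM.hasDerivAt (x := t)
    have hexp : HasDerivAt (fun s : ℝ => Complex.exp (-((a : ℂ) * s * Complex.I)))
        (Complex.exp (-((a : ℂ) * t * Complex.I)) * (-((a : ℂ) * 1 * Complex.I))) t :=
      (((h0.const_mul ((a : ℂ))).mul_const Complex.I).neg).cexp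
    have hF : HasDerivAt (fun s : ℝ => h' s - (b : ℂ) * Complex.I * h s)
        (h'' t - (b : ℂ) * Complex.I * h' t) t :=
      (hd2 t).sub ((hd1 t).const_mul ((b : ℂ) * Complex.I))
    have hmul2 := hexp.mul hF
    have hz : Complex.exp (-((a : ℂ) * t * Complex.I)) * (-((a : ℂ) * 1 * Complex.I))
          * (h' t - (b : ℂ) * Complex.I * h t)
        + Complex.exp (-((a : ℂ) * t * Complex.I)) * (h'' t - (b : ℂ) * Complex.I * h' t)
        = 0 := by
      linear_combination Complex.exp (-((a : ℂ) * t * Complex.I)) * hODE t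
        - Complex.exp (-((a : ℂ) * t * Complex.I)) * Complex.I * h' t * hsum
        + Complex.exp (-((a : ℂ) * t * Complex.I)) * h t * hmul
        + Complex.exp (-((a : ℂ) * t * Complex.I)) * a * b * h t * Complex.I_sq
    exact hz ▸ hmul2
  have hconst : ∀ t : ℝ,
      Complex.exp (-((a : ℂ) * t * Complex.I)) * (h' t - (b : ℂ) * Complex.I * h t)
      = Complex.exp (-((a : ℂ) * (0 : ℝ) * Complex.I))
          * (h' 0 - (b : ℂ) * Complex.I * h 0) :=
    fun t => is_const_of_deriv_eq_zero (fun s => (hd0 s).differentiableAt)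
      (fun s => (hd0 s).deriv) t 0
  intro t
  have h1 := hconst t
  simp only [Complex.ofReal_zero, mul_zero, zero_mul, neg_zero, Complex.exp_zero,
    one_mul] at h1
  have h3 : Complex.exp ((a : ℂ) * t * Complex.I)
      * Complex.exp (-((a : ℂ) * t * Complex.I)) = 1 := by
    rw [← Complex.exp_add]; simp
  linear_combination Complex.exp ((a : ℂ) * t * Complex.I) * h1
    - (h' t - (b : ℂ) * Complex.I * h t) * h3

lemma affine_of_hasDerivAt_const (ψ : ℝ → ℂ) (V : ℂ) (h : ∀ t, HasDerivAt ψ V t) :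
    ∀ t : ℝ, ψ t = ψ 0 + t * V := by
  have hd0 : ∀ t : ℝ, HasDerivAt (fun s : ℝ => ψ s - s * V) 0 t := by
    intro t
    have h0 : HasDerivAt (fun s : ℝ => ((s : ℂ))) 1 t := by
      exact Complex.ofRealCLM.hasDerivAt (x := t)
    have := (h t).sub (h0.mul_const V)
    rw [one_mul, sub_self] at this
    exact this
  intro t
  have h1 := is_const_of_deriv_eq_zero (fun s => (hd0 s).differentiableAt)
    (fun s => (hd0 s).deriv) t 0
  simp only [Complex.ofReal_zero, zero_mul, sub_zero] at h1
  linear_combination h1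

lemma main_aux (ε : ℝ) (hε : 0 < ε) (ζ ξ : ℂ) (hζξ : ζ * ξ = 1) (hζne : ζ ≠ ξ)
    (f g f' g' f'' g'' : ℝ → ℂ)
    (hf : ∀ t, HasDerivAt f (f' t) t) (hg : ∀ t, HasDerivAt g (g' t) t)
    (hf2 : ∀ t, HasDerivAt f' (f'' t) t) (hg2 : ∀ t, HasDerivAt g' (g'' t) t)
    (hsph : ∀ t, Complex.normSq (f t) + Complex.normSq (g t) = 1)
    (c δ : ℝ) (hc2 : c ^ 2 = Complex.normSq (f' 0) + Complex.normSq (g' 0)) (hc0 : 0 ≤ c)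
    (hδ : δ = ((starRingEnd ℂ) (f 0) * f' 0 + (starRingEnd ℂ) (g 0) * g' 0).im)
    (hodef : ∀ t, f'' t - (ε : ℂ) * (Complex.I * f' t) + ((c ^ 2 - ε * δ : ℝ) : ℂ) * f t = 0)
    (hodeg : ∀ t, g'' t - (ε : ℂ) * (Complex.I * g' t) + ((c ^ 2 - ε * δ : ℝ) : ℂ) * g t = 0)
    (S : ℝ) (hS : 0 < S)
    (heqf : ∀ t, ζ * f t = f (t + S)) (heqg : ∀ t, ξ * g t = g (t + S)) :
    (∀ t, f t = 0) ∨ (∀ t, g t = 0) ∨ S ≥ 2 * Real.pi / ε := by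
  -- Cauchy-Schwarz at time 0
  have habs2 : ‖f 0‖ ^ 2 + ‖g 0‖ ^ 2 = 1 := by
    rw [Complex.sq_norm, Complex.sq_norm]; exact hsph 0
  have hδle : δ ≤ c := by
    have h1 : δ ≤ ‖(starRingEnd ℂ) (f 0) * f' 0 + (starRingEnd ℂ) (g 0) * g' 0‖ := by
      rw [hδ]
      exact le_trans (le_abs_self _) (Complex.abs_im_le_norm _)
    have h2 : ‖(starRingEnd ℂ) (f 0) * f' 0 + (starRingEnd ℂ) (g 0) * g' 0‖
        ≤ ‖f 0‖ * ‖f' 0‖ + ‖g 0‖ * ‖g' 0‖ := by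
      refine le_trans (norm_add_le _ _) ?_
      simp [norm_mul]
    have hx : ‖f' 0‖ ^ 2 + ‖g' 0‖ ^ 2 = c ^ 2 := by
      rw [Complex.sq_norm, Complex.sq_norm]; exact hc2.symm
    have h3 : ‖f 0‖ * ‖f' 0‖ + ‖g 0‖ * ‖g' 0‖
        ≤ c := by
      nlinarith [sq_nonneg (‖f 0‖ * ‖g' 0‖
          - ‖g 0‖ * ‖f' 0‖),
        norm_nonneg (f 0), norm_nonneg (g 0),
        norm_nonneg (f' 0), norm_nonneg (g' 0),
        sq_nonneg (‖f 0‖ * ‖f' 0‖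
          + ‖g 0‖ * ‖g' 0‖ + c)]
    linarith
  -- the two frequencies
  have hD0 : 0 ≤ ε ^ 2 + 4 * (c ^ 2 - ε * δ) := by nlinarith [sq_nonneg (ε - 2 * c)]
  obtain ⟨r, hr0, hr2⟩ : ∃ r : ℝ, 0 ≤ r ∧ r ^ 2 = ε ^ 2 + 4 * (c ^ 2 - ε * δ) :=
    ⟨Real.sqrt _, Real.sqrt_nonneg _, Real.sq_sqrt hD0⟩
  obtain ⟨a, b, hab, hprod, hdiff_ab⟩ :
      ∃ a b : ℝ, a + b = ε ∧ -(a * b) = c ^ 2 - ε * δ ∧ a - b = r :=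
    ⟨(ε + r) / 2, (ε - r) / 2, by ring, by linear_combination hr2 / 4, by ring⟩
  have habC : (a : ℂ) + b = (ε : ℂ) := by exact_mod_cast hab
  have hmulC : -((a : ℂ) * b) = ((c ^ 2 - ε * δ : ℝ) : ℂ) := by exact_mod_cast hprod
  have Ff := ode_scalar f f' f'' hf hf2 (ε : ℂ) _ hodef a b habC hmulC
  have Ff' := ode_scalar f f' f'' hf hf2 (ε : ℂ) _ hodef b a
    (by rw [add_comm]; exact habC) (by rw [mul_comm]; exact hmulC)
  have Fg := ode_scalar g g' g'' hg hg2 (ε : ℂ) _ hodeg a b habC hmulC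
  have Fg' := ode_scalar g g' g'' hg hg2 (ε : ℂ) _ hodeg b a
    (by rw [add_comm]; exact habC) (by rw [mul_comm]; exact hmulC)
  -- equivariance of derivatives
  have heqd : ∀ (h h' : ℝ → ℂ) (η : ℂ), (∀ t, HasDerivAt h (h' t) t) →
      (∀ t, η * h t = h (t + S)) → ∀ t, η * h' t = h' (t + S) := by
    intro h h' η hd e1 t
    have h1 : HasDerivAt (fun s : ℝ => h (s + S)) (h' (t + S)) t := by
      have := (hd (t + S)).scomp t ((hasDerivAt_id t).add_const S)
      simp only [one_smul] at this
      exact this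
    have h3 : (fun s : ℝ => η * h s) = fun s : ℝ => h (s + S) := funext e1
    have h2 : HasDerivAt (fun s : ℝ => h (s + S)) (η * h' t) t :=
      h3 ▸ ((hd t).const_mul η)
    exact h2.unique h1
  have heqf' : ∀ t, ζ * f' t = f' (t + S) := heqd f f' ζ hf heqf
  have heqg' : ∀ t, ξ * g' t = g' (t + S) := heqd g g' ξ hg heqg
  -- key cancellation
  have key : ∀ (a' b' : ℝ) (h h' : ℝ → ℂ) (η : ℂ),
      (∀ t, η * h t = h (t + S)) → (∀ t, η * h' t = h' (t + S)) →
      (∀ t : ℝ, h' t - (b' : ℂ) * Complex.I * h t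
        = Complex.exp ((a' : ℂ) * t * Complex.I) * (h' 0 - (b' : ℂ) * Complex.I * h 0)) →
      h' 0 - (b' : ℂ) * Complex.I * h 0 ≠ 0 →
      Complex.exp ((a' : ℂ) * S * Complex.I) = η := by
    intro a' b' h h' η e1 e2 hF hV
    have h1 := hF S
    have h2 : h' S - (b' : ℂ) * Complex.I * h S
        = η * (h' 0 - (b' : ℂ) * Complex.I * h 0) := by
      have e1' : h S = η * h 0 := by simpa using (e1 0).symm
      have e2' : h' S = η * h' 0 := by simpa using (e2 0).symm
      rw [e1', e2']; ring
    exact mul_right_cancel₀ hV (h1.symm.trans h2)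
  -- conclusion from the two exponentials
  have concl : Complex.exp ((a : ℂ) * S * Complex.I)
      * Complex.exp ((b : ℂ) * S * Complex.I) = 1 → S ≥ 2 * Real.pi / ε := by
    intro hprod1
    have h1 : Complex.exp (((ε * S : ℝ) : ℂ) * Complex.I) = 1 := by
      rw [← hprod1, ← Complex.exp_add]
      congr 1
      push_cast
      linear_combination (-(S : ℂ)) * Complex.I * habC
    obtain ⟨n, hn⟩ := Complex.exp_eq_one_iff.mp h1
    have h2 : ε * S = n * (2 * Real.pi) := by
      have := congrArg Complex.im hn
      simpa using this
    have hπ := Real.pi_pos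
    have hnpos : (0 : ℝ) < (n : ℝ) := by nlinarith [mul_pos hε hS]
    have hn1 : (1 : ℝ) ≤ (n : ℝ) := by
      have : (0 : ℤ) < n := by exact_mod_cast hnpos
      exact_mod_cast this
    rw [ge_iff_le, div_le_iff₀ hε]
    nlinarith
  by_cases hrz : r = 0
  · -- degenerate case: double root
    have hba : b = a := by
      have : a - b = 0 := by rw [hdiff_ab, hrz]
      linarith
    rw [hba] at Ff'
    rw [hba] at Fg'
    have habsle : ∀ z : ℂ, Complex.normSq z ≤ 1 → ‖z‖ ≤ 1 := by
      intro z hz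
      rw [Complex.norm_def, ← Real.sqrt_one]
      exact Real.sqrt_le_sqrt hz
    have hsingle : ∀ (h h' : ℝ → ℂ), (∀ t, Complex.normSq (h t) ≤ 1) →
        (∀ t : ℝ, h' t - (a : ℂ) * Complex.I * h t
          = Complex.exp ((a : ℂ) * t * Complex.I) * (h' 0 - (a : ℂ) * Complex.I * h 0)) →
        (∀ t, HasDerivAt h (h' t) t) →
        ∀ t : ℝ, h t = Complex.exp ((a : ℂ) * t * Complex.I) * h 0 := by
      intro h h' hb hF hd
      have hψ : ∀ t : ℝ, HasDerivAt (fun s : ℝ => Complex.exp (-((a : ℂ) * s * Complex.I)) * h s)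
          (h' 0 - (a : ℂ) * Complex.I * h 0) t := by
        intro t
        have h0 : HasDerivAt (fun s : ℝ => ((s : ℂ))) 1 t := by
          exact Complex.ofRealCLM.hasDerivAt (x := t)
        have hexp : HasDerivAt (fun s : ℝ => Complex.exp (-((a : ℂ) * s * Complex.I)))
            (Complex.exp (-((a : ℂ) * t * Complex.I)) * (-((a : ℂ) * 1 * Complex.I))) t :=
          (((h0.const_mul ((a : ℂ))).mul_const Complex.I).neg).cexp
        have hmul2 := hexp.mul (hd t)
        have h5 : Complex.exp ((a : ℂ) * t * Complex.I)
            * Complex.exp (-((a : ℂ) * t * Complex.I)) = 1 := by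
          rw [← Complex.exp_add]; simp
        have hval : Complex.exp (-((a : ℂ) * t * Complex.I)) * (-((a : ℂ) * 1 * Complex.I)) * h t
            + Complex.exp (-((a : ℂ) * t * Complex.I)) * h' t
            = h' 0 - (a : ℂ) * Complex.I * h 0 := by
          linear_combination Complex.exp (-((a : ℂ) * t * Complex.I)) * hF t
            + (h' 0 - (a : ℂ) * Complex.I * h 0) * h5
        exact hval ▸ hmul2
      have haff := affine_of_hasDerivAt_const _ _ hψ
      have hbd : ∀ t : ℝ, ‖Complex.exp (-((a : ℂ) * t * Complex.I)) * h t‖ ≤ 1 := by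
        intro t
        rw [norm_mul]
        have : ‖Complex.exp (-((a : ℂ) * t * Complex.I))‖ = 1 := by
          rw [Complex.norm_exp]
          simp
        rw [this, one_mul]
        exact habsle _ (hb t)
      have hV0 : h' 0 - (a : ℂ) * Complex.I * h 0 = 0 := by
        by_contra hVne
        set V := h' 0 - (a : ℂ) * Complex.I * h 0 with hVdef
        have hVpos : 0 < ‖V‖ := norm_pos_iff.mpr hVne
        set t0 : ℝ := 3 / ‖V‖ with ht0def
        have ht0 : 0 < t0 := by positivity
        have h6 := haff t0
        have h7 : ‖(t0 : ℂ) * V‖ = 3 := by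
          rw [norm_mul, Complex.norm_real, Real.norm_of_nonneg ht0.le, ht0def]
          field_simp
        have h8 := hbd t0
        rw [h6] at h8
        have h9 := hbd 0
        have h10 : ‖(Complex.exp (-((a : ℂ) * (0:ℝ) * Complex.I)) * h 0)
            + (t0 : ℂ) * V‖ ≤ 1 := h8
        have h11 := norm_sub_le
          ((Complex.exp (-((a : ℂ) * (0:ℝ) * Complex.I)) * h 0) + (t0 : ℂ) * V)
          (Complex.exp (-((a : ℂ) * (0:ℝ) * Complex.I)) * h 0)
        have h12 : (Complex.exp (-((a : ℂ) * (0:ℝ) * Complex.I)) * h 0) + (t0 : ℂ) * V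
            - Complex.exp (-((a : ℂ) * (0:ℝ) * Complex.I)) * h 0 = (t0 : ℂ) * V := by ring
        rw [h12, h7] at h11
        linarith
      intro t
      have h12 := haff t
      rw [hV0, mul_zero, add_zero] at h12
      simp only [Complex.ofReal_zero, mul_zero, zero_mul, neg_zero, Complex.exp_zero,
        one_mul] at h12
      have h5 : Complex.exp ((a : ℂ) * t * Complex.I)
          * Complex.exp (-((a : ℂ) * t * Complex.I)) = 1 := by
        rw [← Complex.exp_add]; simp
      linear_combination Complex.exp ((a : ℂ) * t * Complex.I) * h12 - h t * h5
    have hfb : ∀ t, Complex.normSq (f t) ≤ 1 := fun t => by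
      have := hsph t; nlinarith [Complex.normSq_nonneg (g t)]
    have hgb : ∀ t, Complex.normSq (g t) ≤ 1 := fun t => by
      have := hsph t; nlinarith [Complex.normSq_nonneg (f t)]
    have hfs := hsingle f f' hfb Ff' hf
    have hgs := hsingle g g' hgb Fg' hg
    by_cases hf0 : f 0 = 0
    · left; intro t; rw [hfs t, hf0, mul_zero]
    by_cases hg0 : g 0 = 0
    · right; left; intro t; rw [hgs t, hg0, mul_zero]
    exfalso
    have e1 : Complex.exp ((a : ℂ) * S * Complex.I) = ζ := by
      have h2 := heqf 0
      rw [zero_add] at h2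
      refine (mul_right_cancel₀ hf0 ?_).symm
      rw [h2, hfs S]
    have e2 : Complex.exp ((a : ℂ) * S * Complex.I) = ξ := by
      have h2 := heqg 0
      rw [zero_add] at h2
      refine (mul_right_cancel₀ hg0 ?_).symm
      rw [h2, hgs S]
    exact hζne (e1.symm.trans e2)
  · -- distinct roots
    by_cases hfz : ∀ t, f t = 0
    · exact Or.inl hfz
    by_cases hgz : ∀ t, g t = 0
    · exact Or.inr (Or.inl hgz)
    have hvan : ∀ (h h' : ℝ → ℂ),
        (∀ t : ℝ, h' t - (b : ℂ) * Complex.I * h t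
          = Complex.exp ((a : ℂ) * t * Complex.I) * (h' 0 - (b : ℂ) * Complex.I * h 0)) →
        (∀ t : ℝ, h' t - (a : ℂ) * Complex.I * h t
          = Complex.exp ((b : ℂ) * t * Complex.I) * (h' 0 - (a : ℂ) * Complex.I * h 0)) →
        (h' 0 - (b : ℂ) * Complex.I * h 0 = 0) → (h' 0 - (a : ℂ) * Complex.I * h 0 = 0) →
        ∀ t, h t = 0 := by
      intro h h' hFa hFb hV1 hV2 t
      have h1 := hFa t; rw [hV1, mul_zero] at h1
      have h2 := hFb t; rw [hV2, mul_zero] at h2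
      have h3 : ((a : ℂ) - b) * Complex.I * h t = 0 := by linear_combination h1 - h2
      have hab' : ((a : ℂ) - b) ≠ 0 := by
        have h4 : ((a : ℂ) - b) = ((r : ℝ) : ℂ) := by exact_mod_cast hdiff_ab
        rw [h4]
        exact Complex.ofReal_ne_zero.mpr hrz
      simpa [mul_eq_zero, hab', Complex.I_ne_zero] using h3
    have hVf : (f' 0 - (b : ℂ) * Complex.I * f 0 ≠ 0)
        ∨ (f' 0 - (a : ℂ) * Complex.I * f 0 ≠ 0) := by
      by_contra hcon
      push_neg at hcon
      exact hfz (hvan f f' Ff Ff' hcon.1 hcon.2)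
    have hVg : (g' 0 - (b : ℂ) * Complex.I * g 0 ≠ 0)
        ∨ (g' 0 - (a : ℂ) * Complex.I * g 0 ≠ 0) := by
      by_contra hcon
      push_neg at hcon
      exact hgz (hvan g g' Fg Fg' hcon.1 hcon.2)
    right; right
    rcases hVf with h1 | h1
    · have e1 : Complex.exp ((a : ℂ) * S * Complex.I) = ζ := key a b f f' ζ heqf heqf' Ff h1
      rcases hVg with h2 | h2
      · have e2 : Complex.exp ((a : ℂ) * S * Complex.I) = ξ := key a b g g' ξ heqg heqg' Fg h2
        exact absurd (e1.symm.trans e2) hζne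
      · have e2 : Complex.exp ((b : ℂ) * S * Complex.I) = ξ := key b a g g' ξ heqg heqg' Fg' h2
        exact concl (by rw [e1, e2, hζξ])
    · have e1 : Complex.exp ((b : ℂ) * S * Complex.I) = ζ := key b a f f' ζ heqf heqf' Ff' h1
      rcases hVg with h2 | h2
      · have e2 : Complex.exp ((a : ℂ) * S * Complex.I) = ξ := key a b g g' ξ heqg heqg' Fg h2
        exact concl (by rw [e1, e2, mul_comm ξ ζ, hζξ])
      · have e2 : Complex.exp ((b : ℂ) * S * Complex.I) = ξ := key b a g g' ξ heqg heqg' Fg' h2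
        exact absurd (e1.symm.trans e2) hζne

theorem stmt_10 (ε : ℝ) (hε : 0 < ε) (p : ℕ) (hp : 3 ≤ p) (hodd : Odd p)
    (γ : ℝ → ℂ × ℂ)
    (hdiff : Differentiable ℝ γ) (hdiff2 : Differentiable ℝ (deriv γ))
    (hnonconst : ∃ s t : ℝ, γ s ≠ γ t)
    (hsphere : ∀ t : ℝ, hNorm (γ t) = 1)
    (c δ : ℝ) (hc : c = hNorm (deriv γ 0))
    (hδ : δ = ((starRingEnd ℂ) (γ 0).1 * (deriv γ 0).1
      + (starRingEnd ℂ) (γ 0).2 * (deriv γ 0).2).im)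
    (hode : ∀ t : ℝ, deriv (deriv γ) t - ε • (Complex.I • deriv γ t)
      + (c ^ 2 - ε * δ) • γ t = 0)
    (S : ℝ) (hS : 0 < S)
    (hequiv : ∀ t : ℝ,
      (Complex.exp (2 * Real.pi * Complex.I / p) * (γ t).1,
        Complex.exp (-(2 * Real.pi * Complex.I / p)) * (γ t).2) = γ (t + S)) :
    (∀ t : ℝ, (γ t).1 = 0) ∨ (∀ t : ℝ, (γ t).2 = 0) ∨ S ≥ 2 * Real.pi / ε := by
  have hγ' : ∀ t, HasDerivAt γ (deriv γ t) t := fun t => (hdiff t).hasDerivAt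
  have hγ'' : ∀ t, HasDerivAt (deriv γ) (deriv (deriv γ) t) t := fun t => (hdiff2 t).hasDerivAt
  have hf : ∀ t, HasDerivAt (fun s : ℝ => (γ s).1) ((deriv γ t).1) t := by
    intro t
    exact ((ContinuousLinearMap.fst ℝ ℂ ℂ).hasFDerivAt.comp_hasDerivAt t (hγ' t))
  have hg : ∀ t, HasDerivAt (fun s : ℝ => (γ s).2) ((deriv γ t).2) t := by
    intro t
    exact ((ContinuousLinearMap.snd ℝ ℂ ℂ).hasFDerivAt.comp_hasDerivAt t (hγ' t))
  have hf2 : ∀ t, HasDerivAt (fun s : ℝ => (deriv γ s).1) ((deriv (deriv γ) t).1) t := by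
    intro t
    exact ((ContinuousLinearMap.fst ℝ ℂ ℂ).hasFDerivAt.comp_hasDerivAt t (hγ'' t))
  have hg2 : ∀ t, HasDerivAt (fun s : ℝ => (deriv γ s).2) ((deriv (deriv γ) t).2) t := by
    intro t
    exact ((ContinuousLinearMap.snd ℝ ℂ ℂ).hasFDerivAt.comp_hasDerivAt t (hγ'' t))
  have hsph : ∀ t, Complex.normSq ((γ t).1) + Complex.normSq ((γ t).2) = 1 := by
    intro t
    have := hsphere t
    simp only [hNorm] at this
    exact Real.sqrt_eq_one.mp this
  have hc0 : 0 ≤ c := by rw [hc]; exact Real.sqrt_nonneg _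
  have hc2 : c ^ 2 = Complex.normSq ((deriv γ 0).1) + Complex.normSq ((deriv γ 0).2) := by
    rw [hc]
    simp only [hNorm]
    rw [Real.sq_sqrt (add_nonneg (Complex.normSq_nonneg _) (Complex.normSq_nonneg _))]
  have hodef : ∀ t, (deriv (deriv γ) t).1 - (ε : ℂ) * (Complex.I * (deriv γ t).1)
      + ((c ^ 2 - ε * δ : ℝ) : ℂ) * (γ t).1 = 0 := by
    intro t
    have h1 := congrArg Prod.fst (hode t)
    simpa [Prod.smul_fst, smul_eq_mul, Complex.real_smul] using h1
  have hodeg : ∀ t, (deriv (deriv γ) t).2 - (ε : ℂ) * (Complex.I * (deriv γ t).2)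
      + ((c ^ 2 - ε * δ : ℝ) : ℂ) * (γ t).2 = 0 := by
    intro t
    have h1 := congrArg Prod.snd (hode t)
    simpa [Prod.smul_snd, smul_eq_mul, Complex.real_smul] using h1
  have heqf : ∀ t, Complex.exp (2 * Real.pi * Complex.I / p) * (γ t).1 = (γ (t + S)).1 :=
    fun t => congrArg Prod.fst (hequiv t)
  have heqg : ∀ t, Complex.exp (-(2 * Real.pi * Complex.I / p)) * (γ t).2 = (γ (t + S)).2 :=
    fun t => congrArg Prod.snd (hequiv t)
  have hp0 : (0 : ℝ) < p := by
    have : (3 : ℝ) ≤ p := by exact_mod_cast hp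
    linarith
  have hζξ : Complex.exp (2 * Real.pi * Complex.I / p)
      * Complex.exp (-(2 * Real.pi * Complex.I / p)) = 1 := by
    rw [← Complex.exp_add]; simp
  have harg1 : 2 * (Real.pi : ℂ) * Complex.I / (p : ℂ) = ((2 * Real.pi / p : ℝ) : ℂ) * Complex.I := by
    push_cast
    ring
  have harg2 : -(2 * (Real.pi : ℂ) * Complex.I / (p : ℂ))
      = ((-(2 * Real.pi / p) : ℝ) : ℂ) * Complex.I := by
    push_cast
    ring
  have hsin : 0 < Real.sin (2 * Real.pi / p) := by
    apply Real.sin_pos_of_pos_of_lt_pi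
    · positivity
    · rw [div_lt_iff₀ hp0]
      have : (3 : ℝ) ≤ p := by exact_mod_cast hp
      nlinarith [Real.pi_pos]
  have hζne : Complex.exp (2 * Real.pi * Complex.I / p)
      ≠ Complex.exp (-(2 * Real.pi * Complex.I / p)) := by
    intro hcon
    have h1 : (Complex.exp (2 * Real.pi * Complex.I / p)).im = Real.sin (2 * Real.pi / p) := by
      rw [harg1, Complex.exp_ofReal_mul_I_im]
    have h2 : (Complex.exp (-(2 * Real.pi * Complex.I / p))).im
        = Real.sin (-(2 * Real.pi / p)) := by
      rw [harg2, Complex.exp_ofReal_mul_I_im]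
    rw [hcon] at h1
    rw [h2, Real.sin_neg] at h1
    linarith
  exact main_aux ε hε _ _ hζξ hζne
    (fun t => (γ t).1) (fun t => (γ t).2)
    (fun t => (deriv γ t).1) (fun t => (deriv γ t).2)
    (fun t => (deriv (deriv γ) t).1) (fun t => (deriv (deriv γ) t).2)
    hf hg hf2 hg2 hsph c δ hc2 hc0 hδ hodef hodeg S hS heqf heqg
end

section
/- Let ε ∈ ℝ, x, v ∈ ℂ × ℂ with ‖x‖ = 1, set c := ‖v‖, δ := Im⟪x,v⟫, assume D := ε² + 4(c² − ε·δ) > 0, and set θ₊ := (ε + √D)/2, θ₋ := (ε − √D)/2, p₊ := −(θ₋·x + i·v)/(θ₊ − θ₋), p₋ := (θ₊·x + i·v)/(θ₊ − θ₋). Then Re⟪p₊, p₋⟫ = 0, and consequently ‖p₊‖² + ‖p₋‖² = 1 and c² = θ₊²·‖p₊‖² + θ₋²·‖p₋‖². -/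
set_option maxHeartbeats 1000000


open Complex

theorem stmt_16 (ε : ℝ) (x v : ℂ × ℂ) (hx : hNorm x = 1)
    (c δ D : ℝ) (hc : c = hNorm v) (hδ : δ = (hInner x v).im)
    (hD : D = ε ^ 2 + 4 * (c ^ 2 - ε * δ)) (hDpos : 0 < D)
    (θp θm : ℝ) (hθp : θp = (ε + Real.sqrt D) / 2) (hθm : θm = (ε - Real.sqrt D) / 2)
    (pp pm : ℂ × ℂ)
    (hpp : pp = -((θp - θm)⁻¹ • (θm • x + Complex.I • v)))
    (hpm : pm = (θp - θm)⁻¹ • (θp • x + Complex.I • v)) :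
    (hInner pp pm).re = 0 ∧
    hNorm pp ^ 2 + hNorm pm ^ 2 = 1 ∧
    c ^ 2 = θp ^ 2 * hNorm pp ^ 2 + θm ^ 2 * hNorm pm ^ 2 := by
  subst hD
  set s := Real.sqrt (ε ^ 2 + 4 * (c ^ 2 - ε * δ)) with hs
  have hs2 : s ^ 2 = ε ^ 2 + 4 * (c ^ 2 - ε * δ) := Real.sq_sqrt hDpos.le
  have hspos : 0 < s := Real.sqrt_pos.mpr hDpos
  have hs0 : s ≠ 0 := hspos.ne'
  have hdiff : θp - θm = s := by rw [hθp, hθm]; ring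
  have hsum : θp + θm = ε := by rw [hθp, hθm]; ring
  have hProd : θp * θm = ε * δ - c ^ 2 := by
    rw [hθp, hθm]; linear_combination (-1/4 : ℝ) * hs2
  have hδ' : δ = x.1.re * v.1.im - x.1.im * v.1.re + (x.2.re * v.2.im - x.2.im * v.2.re) := by
    rw [hδ]; simp [hInner, Complex.add_im, Complex.mul_im, Complex.conj_re, Complex.conj_im]
    ring
  have hxn' : x.1.re ^ 2 + x.1.im ^ 2 + (x.2.re ^ 2 + x.2.im ^ 2) = 1 := by
    have h := congrArg (· ^ 2) hx
    simp only [hNorm, one_pow] at h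
    rw [Real.sq_sqrt (add_nonneg (normSq_nonneg _) (normSq_nonneg _))] at h
    simpa [Complex.normSq_apply, sq] using h
  have hcn' : c ^ 2 = v.1.re ^ 2 + v.1.im ^ 2 + (v.2.re ^ 2 + v.2.im ^ 2) := by
    rw [hc]
    rw [hNorm, Real.sq_sqrt (add_nonneg (normSq_nonneg _) (normSq_nonneg _))]
    simp [Complex.normSq_apply, sq]
  have hA : ∀ θ : ℝ, Complex.normSq ((θ : ℂ) * x.1 + Complex.I * v.1)
      + Complex.normSq ((θ : ℂ) * x.2 + Complex.I * v.2) = θ ^ 2 - 2 * θ * δ + c ^ 2 := by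
    intro θ
    simp only [Complex.normSq_apply, Complex.add_re, Complex.add_im, Complex.mul_re,
      Complex.mul_im, Complex.I_re, Complex.I_im, Complex.ofReal_re, Complex.ofReal_im]
    linear_combination (θ ^ 2) * hxn' + 2 * θ * hδ' - hcn'
  have hNpp : hNorm pp ^ 2 = (θm ^ 2 - 2 * θm * δ + c ^ 2) / s ^ 2 := by
    have h1 : hNorm pp ^ 2 = Complex.normSq pp.1 + Complex.normSq pp.2 :=
      Real.sq_sqrt (add_nonneg (normSq_nonneg _) (normSq_nonneg _))
    rw [h1, hpp, hdiff]
    simp only [Prod.fst_neg, Prod.snd_neg, Prod.fst_add, Prod.snd_add, Prod.smul_fst,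
      Prod.smul_snd, Complex.real_smul, smul_eq_mul, Complex.normSq_neg, Complex.normSq_mul,
      Complex.normSq_ofReal]
    have h2 := hA θm
    field_simp
    linear_combination h2
  have hNpm : hNorm pm ^ 2 = (θp ^ 2 - 2 * θp * δ + c ^ 2) / s ^ 2 := by
    have h1 : hNorm pm ^ 2 = Complex.normSq pm.1 + Complex.normSq pm.2 :=
      Real.sq_sqrt (add_nonneg (normSq_nonneg _) (normSq_nonneg _))
    rw [h1, hpm, hdiff]
    simp only [Prod.fst_add, Prod.snd_add, Prod.smul_fst, Prod.smul_snd,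
      Complex.real_smul, smul_eq_mul, Complex.normSq_mul, Complex.normSq_ofReal]
    have h2 := hA θp
    field_simp
    linear_combination h2
  refine ⟨?_, ?_, ?_⟩
  · rw [hpp, hpm, hdiff]
    simp only [hInner, Prod.fst_add, Prod.snd_add, Prod.smul_fst, Prod.smul_snd, Prod.fst_neg,
      Prod.snd_neg, Complex.real_smul, smul_eq_mul, Complex.neg_re, Complex.neg_im,
      Complex.add_re, Complex.add_im, Complex.mul_re, Complex.mul_im, Complex.ofReal_re,
      Complex.ofReal_im, Complex.I_re, Complex.I_im, map_mul, Complex.conj_re, Complex.conj_im]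
    field_simp
    linear_combination (x.1.re*v.1.im + x.2.re*v.2.im - x.1.im*v.1.re - x.2.im*v.2.re) * hsum + (-x.1.re^2 - x.2.re^2 - x.1.im^2 - x.2.im^2) * hProd + (-x.1.re^2*ε - x.2.re^2*ε - x.1.im^2*ε - x.2.im^2*ε) * hδ' + (x.1.re^2 + x.2.re^2 + x.1.im^2 + x.2.im^2) * hcn' + (-x.1.re*ε*v.1.im - x.2.re*ε*v.2.im + x.1.im*ε*v.1.re + x.2.im*ε*v.2.re + v.1.re^2 + v.2.re^2 + v.1.im^2 + v.2.im^2) * hxn'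
  · rw [hNpp, hNpm]
    field_simp
    linear_combination (-2*δ - s - θm + θp) * hsum + (ε + s - 2*θm) * hdiff + 2 * hProd
  · rw [hNpp, hNpm]
    field_simp
    linear_combination (c^2*s - c^2*θm - c^2*θp + 2*δ*ε*θm + 2*δ*θm*θp - 2*θm^2*θp) * hsum + (-c^2*ε - c^2*s + 2*c^2*θm) * hdiff + (-2*ε*θm + 2*θm^2) * hProd
end
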